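/- arXiv:1303.1743 — 4 statements merged into one kernel-verified Lean document; each statement's English description precedes it below -/
import Mathlib

section
/- Let p : ℝ^d → ℝ be a probability density belonging to the Hölder class H₂^{(α)}(K) for some 0 < α ≤ 1 and K > 0, i.e., (∫_{ℝ^d} (p(x+h) − p(x))² dx)^{1/2} ≤ K|h|^α for all h with |h| ≤ 1. Let X, Y be independent random vectors with density p, let q_{2,ε} := P(|X − Y| ≤ ε) and b_ε(d) denote the volume of the Euclidean ball of radius ε in ℝ^d, and let q̃_{2,ε} := q_{2,ε}/b_ε(d) and q₂ := ∫_{ℝ^d} p(x)² dx. Then for all 0 < ε ≤ 1, |q̃_{2,ε} − q₂| ≤ (1/2) K² ε^{2α}. -/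
open MeasureTheory Real

/-- Bias bound for the normalized ε-coincidence probability under an L²-Hölder
condition: if the density `p ∈ H₂^{(α)}(K)`, then
`|q_{2,ε}/b_ε(d) − ∫ p²| ≤ (1/2) K² ε^{2α}` for all `0 < ε ≤ 1`. -/
theorem stmt_2 (d : ℕ) (hd : 0 < d) (α K : ℝ) (hα : 0 < α) (hα1 : α ≤ 1) (hK : 0 < K)
    (p : EuclideanSpace ℝ (Fin d) → ℝ)
    (hpm : Measurable p) (hpn : ∀ x, 0 ≤ p x)
    (hpi : Integrable p) (hp1 : ∫ x, p x = 1)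
    (hp2 : Integrable (fun x => p x ^ 2))
    (hHolder : ∀ h : EuclideanSpace ℝ (Fin d), ‖h‖ ≤ 1 →
      (∫ x, (p (x + h) - p x) ^ 2) ^ ((1 : ℝ) / 2) ≤ K * ‖h‖ ^ α) :
    ∀ ε : ℝ, 0 < ε → ε ≤ 1 →
      |(∫ x, (∫ y in Metric.closedBall x ε, p y) * p x) /
          (volume (Metric.closedBall (0 : EuclideanSpace ℝ (Fin d)) ε)).toReal
        - ∫ x, p x ^ 2| ≤ 1 / 2 * K ^ 2 * ε ^ (2 * α) := by
  intro ε hε hε1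
  have hεn : (0:ℝ) ≤ ε := hε.le
  set B := Metric.closedBall (0 : EuclideanSpace ℝ (Fin d)) ε with hBdef
  have hBm : MeasurableSet B := measurableSet_closedBall
  have hb_pos : 0 < volume B := Metric.measure_closedBall_pos volume _ hε
  have hb_fin : volume B < ⊤ := measure_closedBall_lt_top
  set b := (volume B).toReal with hbdef
  have hb : 0 < b := ENNReal.toReal_pos hb_pos.ne' hb_fin.ne
  set q₂ := ∫ x, p x ^ 2 with hq2def
  -- translates of p are integrable
  have hpiL : ∀ x : EuclideanSpace ℝ (Fin d), Integrable (fun h => p (x + h)) := by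
    intro x
    exact ((measurePreserving_add_left volume x).integrable_comp
      hpm.aestronglyMeasurable).2 hpi
  have hp2R : ∀ h : EuclideanSpace ℝ (Fin d), Integrable (fun x => p (x + h) ^ 2) := by
    intro h
    exact ((measurePreserving_add_right volume h).integrable_comp
      (hpm.pow_const 2).aestronglyMeasurable).2 hp2
  -- products are integrable
  have hmul : ∀ h : EuclideanSpace ℝ (Fin d), Integrable (fun x => p (x + h) * p x) := by
    intro h
    have hgint : Integrable (fun x => (p (x + h) ^ 2 + p x ^ 2) / 2) :=
      ((hp2R h).add hp2).div_const 2
    refine Integrable.mono' hgint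
      (((hpm.comp (measurable_add_const h)).mul hpm).aestronglyMeasurable) ?_
    filter_upwards with x
    rw [Real.norm_eq_abs, abs_of_nonneg (mul_nonneg (hpn _) (hpn _))]
    nlinarith [sq_nonneg (p (x + h) - p x)]
  have hq2h : ∀ h : EuclideanSpace ℝ (Fin d), (∫ x, p (x + h) ^ 2) = q₂ := fun h =>
    integral_add_right_eq_self (fun x => p x ^ 2) h
  -- key algebraic identity
  have hg_eq : ∀ h : EuclideanSpace ℝ (Fin d),
      (∫ x, (p (x + h) - p x) ^ 2) = 2 * q₂ - 2 * ∫ x, p (x + h) * p x := by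
    intro h
    have heq : (fun x => (p (x + h) - p x) ^ 2)
        = fun x => (p (x + h) ^ 2 + p x ^ 2) - 2 * (p (x + h) * p x) := by
      ext x; ring
    have hadd : Integrable (fun x => p (x + h) ^ 2 + p x ^ 2) := (hp2R h).add hp2
    have hcm : Integrable (fun x => 2 * (p (x + h) * p x)) := (hmul h).const_mul 2
    rw [heq, integral_sub hadd hcm, integral_add (hp2R h) hp2,
      integral_const_mul, hq2h h]
    ring
  have hg_nonneg : ∀ h : EuclideanSpace ℝ (Fin d),
      0 ≤ ∫ x, (p (x + h) - p x) ^ 2 := fun h =>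
    integral_nonneg fun x => sq_nonneg _
  -- pointwise bounds on I h := ∫ x, p (x+h) * p x
  have hI_le : ∀ h : EuclideanSpace ℝ (Fin d), (∫ x, p (x + h) * p x) ≤ q₂ := by
    intro h
    have := hg_nonneg h
    rw [hg_eq h] at this
    linarith
  have hI_nonneg : ∀ h : EuclideanSpace ℝ (Fin d), 0 ≤ ∫ x, p (x + h) * p x := fun h =>
    integral_nonneg fun x => mul_nonneg (hpn _) (hpn _)
  have hRHSn : 0 ≤ 1 / 2 * K ^ 2 * ε ^ (2 * α) := by positivity
  have hI_ge : ∀ h ∈ B, q₂ - 1 / 2 * K ^ 2 * ε ^ (2 * α) ≤ ∫ x, p (x + h) * p x := by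
    intro h hh
    have hhε : ‖h‖ ≤ ε := by
      simpa [hBdef, Metric.mem_closedBall, dist_eq_norm] using hh
    have hh1 : ‖h‖ ≤ 1 := hhε.trans hε1
    have hHol := hHolder h hh1
    set g := ∫ x, (p (x + h) - p x) ^ 2 with hgdef
    have hg0 : 0 ≤ g := hg_nonneg h
    have hgid : g = (g ^ ((1:ℝ)/2)) ^ 2 := by
      rw [← Real.rpow_natCast (g ^ ((1:ℝ)/2)) 2, ← Real.rpow_mul hg0]
      norm_num
    have h1 : g ≤ (K * ‖h‖ ^ α) ^ 2 := by
      rw [hgid]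
      exact pow_le_pow_left₀ (Real.rpow_nonneg hg0 _) hHol 2
    have h2 : ‖h‖ ^ α ≤ ε ^ α := Real.rpow_le_rpow (norm_nonneg h) hhε hα.le
    have h3 : (ε ^ α) ^ 2 = ε ^ (2 * α) := by
      rw [← Real.rpow_natCast (ε ^ α) 2, ← Real.rpow_mul hεn]
      norm_num [mul_comm]
    have h4 : (K * ‖h‖ ^ α) ^ 2 ≤ K ^ 2 * ε ^ (2 * α) := by
      rw [mul_pow, ← h3]
      exact mul_le_mul_of_nonneg_left
        (pow_le_pow_left₀ (Real.rpow_nonneg (norm_nonneg h) _) h2 2) (sq_nonneg K)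
    have := hg_eq h
    nlinarith
  -- measurability of I
  have hIsm : StronglyMeasurable
      (fun h : EuclideanSpace ℝ (Fin d) => ∫ x, p (x + h) * p x) := by
    have hm : StronglyMeasurable
        (fun z : EuclideanSpace ℝ (Fin d) × EuclideanSpace ℝ (Fin d) =>
          p (z.2 + z.1) * p z.2) :=
      ((hpm.comp (measurable_snd.add measurable_fst)).mul
        (hpm.comp measurable_snd)).stronglyMeasurable
    exact hm.integral_prod_right'
  have hIint : IntegrableOn
      (fun h : EuclideanSpace ℝ (Fin d) => ∫ x, p (x + h) * p x) B := by
    have hc : IntegrableOn (fun _ : EuclideanSpace ℝ (Fin d) => q₂) B volume :=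
      integrableOn_const hb_fin.ne
    refine Integrable.mono' hc hIsm.aestronglyMeasurable.restrict ?_
    filter_upwards with h
    rw [Real.norm_eq_abs, abs_of_nonneg (hI_nonneg h)]
    exact hI_le h
  -- rewrite the ball integral as a translate integral
  have hball : ∀ x : EuclideanSpace ℝ (Fin d),
      (∫ y in Metric.closedBall x ε, p y) = ∫ h in B, p (x + h) := by
    intro x
    have hmp : MeasurePreserving (fun h : EuclideanSpace ℝ (Fin d) => x + h)
        volume volume := measurePreserving_add_left volume x
    have hemb : MeasurableEmbedding (fun h : EuclideanSpace ℝ (Fin d) => x + h) :=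
      (MeasurableEquiv.addLeft x).measurableEmbedding
    have hpre : (fun h : EuclideanSpace ℝ (Fin d) => x + h) ⁻¹' Metric.closedBall x ε
        = B := by
      ext h
      simp [hBdef, Metric.mem_closedBall, dist_eq_norm]
    rw [← hmp.setIntegral_preimage_emb hemb p (Metric.closedBall x ε), hpre]
  -- Fubini
  have hFub : Integrable
      (Function.uncurry fun (x h : EuclideanSpace ℝ (Fin d)) => p (x + h) * p x)
      (volume.prod (volume.restrict B)) := by
    have hUncMeas : AEStronglyMeasurable
        (Function.uncurry fun (x h : EuclideanSpace ℝ (Fin d)) => p (x + h) * p x)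
        (volume.prod (volume.restrict B)) :=
      (((hpm.comp (measurable_fst.add measurable_snd)).mul
        (hpm.comp measurable_fst)).stronglyMeasurable).aestronglyMeasurable
    rw [integrable_prod_iff hUncMeas]
    constructor
    · refine Filter.Eventually.of_forall fun x => ?_
      exact ((hpiL x).restrict.mul_const (p x))
    · refine Integrable.mono' hpi ?_ ?_
      · exact ((((hpm.comp (measurable_fst.add measurable_snd)).mul
          (hpm.comp measurable_fst)).norm).stronglyMeasurable).integral_prod_right'.aestronglyMeasurable
      · refine Filter.Eventually.of_forall fun x => ?_
        have h1 : ∀ h : EuclideanSpace ℝ (Fin d),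
            ‖p (x + h) * p x‖ = p (x + h) * p x := fun h => by
          rw [Real.norm_eq_abs, abs_of_nonneg (mul_nonneg (hpn _) (hpn _))]
        have h2 : (∫ h in B, ‖p (x + h) * p x‖) = (∫ h in B, p (x + h)) * p x := by
          simp_rw [h1]
          exact integral_mul_const _ _
        have h3 : (∫ h in B, p (x + h)) ≤ 1 := by
          have := setIntegral_le_integral (s := B) (hpiL x)
            (Filter.Eventually.of_forall fun h => hpn _)
          calc (∫ h in B, p (x + h)) ≤ ∫ h, p (x + h) := this
            _ = ∫ y, p y := integral_add_left_eq_self (μ := volume) p x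
            _ = 1 := hp1
        have h4 : 0 ≤ ∫ h in B, p (x + h) :=
          setIntegral_nonneg hBm fun h _ => hpn _
        simp only [Function.uncurry_apply_pair]
        rw [Real.norm_eq_abs, h2, abs_of_nonneg (mul_nonneg h4 (hpn x))]
        calc (∫ h in B, p (x + h)) * p x ≤ 1 * p x :=
              mul_le_mul_of_nonneg_right h3 (hpn x)
          _ = p x := one_mul _
  have hswap : (∫ x, (∫ h in B, p (x + h)) * p x)
      = ∫ h in B, ∫ x, p (x + h) * p x := by
    have heq : ∀ x : EuclideanSpace ℝ (Fin d),
        (∫ h in B, p (x + h)) * p x = ∫ h in B, p (x + h) * p x := fun x =>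
      (integral_mul_const _ _).symm
    simp_rw [heq]
    exact integral_integral_swap hFub
  -- assemble
  have hN : (∫ x, (∫ y in Metric.closedBall x ε, p y) * p x)
      = ∫ h in B, ∫ x, p (x + h) * p x := by
    simp_rw [hball]; exact hswap
  set N := ∫ h in B, ∫ x, p (x + h) * p x with hNdef
  have hconst : ∫ _h in B, q₂ = b * q₂ := by
    rw [setIntegral_const, smul_eq_mul, measureReal_def, ← hbdef]
  have hdiff : N - b * q₂ = ∫ h in B, ((∫ x, p (x + h) * p x) - q₂) := by
    rw [← hconst, hNdef, ← integral_sub hIint (integrableOn_const hb_fin.ne)]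
  have hupper : (∫ h in B, ((∫ x, p (x + h) * p x) - q₂)) ≤ 0 := by
    have : (∫ h in B, ((∫ x, p (x + h) * p x) - q₂)) ≤ ∫ _h in B, (0:ℝ) := by
      refine setIntegral_mono_on (hIint.sub (integrableOn_const hb_fin.ne))
        (integrableOn_const hb_fin.ne) hBm fun h _ => ?_
      linarith [hI_le h]
    simpa using this
  have hlower : -(1 / 2 * K ^ 2 * ε ^ (2 * α)) * b
      ≤ ∫ h in B, ((∫ x, p (x + h) * p x) - q₂) := by
    have : (∫ _h in B, (-(1 / 2 * K ^ 2 * ε ^ (2 * α))))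
        ≤ ∫ h in B, ((∫ x, p (x + h) * p x) - q₂) := by
      refine setIntegral_mono_on (integrableOn_const hb_fin.ne)
        (hIint.sub (integrableOn_const hb_fin.ne)) hBm fun h hh => ?_
      linarith [hI_ge h hh]
    calc -(1 / 2 * K ^ 2 * ε ^ (2 * α)) * b
        = ∫ _h in B, (-(1 / 2 * K ^ 2 * ε ^ (2 * α))) := by
          rw [setIntegral_const, smul_eq_mul, measureReal_def, ← hbdef]; ring
      _ ≤ _ := this
  have hbne : b ≠ 0 := hb.ne'
  have hmain : N / b - q₂ = (N - b * q₂) / b := by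
    field_simp
  rw [hN, hmain, hdiff, abs_le]
  have hRb : 0 ≤ 1 / 2 * K ^ 2 * ε ^ (2 * α) * b := mul_nonneg hRHSn hb.le
  have hneg : -(1 / 2 * K ^ 2 * ε ^ (2 * α)) * b
      = -(1 / 2 * K ^ 2 * ε ^ (2 * α) * b) := by ring
  constructor
  · rw [neg_le, ← neg_div, div_le_iff₀ hb]
    exact neg_le.mpr (hneg ▸ hlower)
  · rw [div_le_iff₀ hb]
    exact hupper.trans hRb
end

section
/- Let X be a random vector in ℝ^d with density p ∈ L²(ℝ^d), and for ε > 0 let p_{X,ε}(x) = P(X ∈ B_ε(x)) be the ε-ball probability. If p ∈ L³(ℝ^d) and X₁, X₂ are any two (possibly dependent) random vectors each with marginal density p, then E[p_{X,ε}(X₁) p_{X,ε}(X₂)] / b_ε(d)² → E[p(X₁) p(X₂)] as ε → 0, provided E[p(X₁)p(X₂)] is finite and the joint density of (X₁,X₂) makes all expectations well defined. -/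
open MeasureTheory Real Filter Topology
open scoped ENNReal NNReal

namespace Stmt7Aux

noncomputable section
open Metric

variable {d : ℕ}

abbrev Eu (d : ℕ) := EuclideanSpace ℝ (Fin d)

def BB (d : ℕ) (ε : ℝ) : ℝ≥0∞ := volume (closedBall (0 : Eu d) ε)

/-- The ball average of `f` at scale `ε`. -/
def av (f : Eu d → ℝ) (ε : ℝ) (x : Eu d) : ℝ :=
  (∫ y in closedBall x ε, f y) / (BB d ε).toReal

lemma BB_ne_zero {ε : ℝ} (hε : 0 < ε) : BB d ε ≠ 0 :=
  (measure_closedBall_pos volume 0 hε).ne'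

lemma BB_ne_top (ε : ℝ) : BB d ε ≠ ⊤ :=
  measure_closedBall_lt_top.ne

lemma vol_closedBall (x : Eu d) (ε : ℝ) : volume (closedBall x ε) = BB d ε :=
  Measure.addHaar_closedBall_center volume x ε

lemma measurable_ballInt {f : Eu d → ℝ} (hf : Measurable f) (ε : ℝ) :
    Measurable fun x : Eu d => ∫ y in closedBall x ε, f y := by
  have hD : MeasurableSet {q : Eu d × Eu d | dist q.2 q.1 ≤ ε} :=
    (isClosed_le (continuous_snd.dist continuous_fst) continuous_const).measurableSet
  have hsm : StronglyMeasurable fun q : Eu d × Eu d =>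
      Set.indicator {q : Eu d × Eu d | dist q.2 q.1 ≤ ε} (fun q => f q.2) q :=
    ((hf.comp measurable_snd).indicator hD).stronglyMeasurable
  have h2 := hsm.integral_prod_right' (ν := volume)
  have heq : (fun x : Eu d => ∫ y in closedBall x ε, f y)
      = fun x => ∫ y, Set.indicator {q : Eu d × Eu d | dist q.2 q.1 ≤ ε}
          (fun q => f q.2) (x, y) := by
    funext x
    have hind : Set.indicator (closedBall x ε) f
        = fun y => Set.indicator {q : Eu d × Eu d | dist q.2 q.1 ≤ ε} (fun q => f q.2) (x, y) := by
      funext y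
      by_cases h : y ∈ closedBall x ε
      · rw [Set.indicator_of_mem h, Set.indicator_of_mem (by simpa [mem_closedBall] using h)]
      · rw [Set.indicator_of_notMem h,
          Set.indicator_of_notMem (by simpa [mem_closedBall] using h)]
    rw [← integral_indicator measurableSet_closedBall, hind]
  rw [heq]
  exact h2.measurable

lemma measurable_av {f : Eu d → ℝ} (hf : Measurable f) (ε : ℝ) :
    Measurable (av f ε) :=
  (measurable_ballInt hf ε).div_const _

lemma measurable_ballLInt {H : Eu d → ℝ≥0∞} (hH : Measurable H) (ε : ℝ) :
    Measurable fun x : Eu d => ∫⁻ y in closedBall x ε, H y ∂volume := by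
  have hD : MeasurableSet {q : Eu d × Eu d | dist q.2 q.1 ≤ ε} :=
    (isClosed_le (continuous_snd.dist continuous_fst) continuous_const).measurableSet
  have hm : Measurable fun q : Eu d × Eu d =>
      Set.indicator {q : Eu d × Eu d | dist q.2 q.1 ≤ ε} (fun q => H q.2) q :=
    (hH.comp measurable_snd).indicator hD
  have heq : (fun x : Eu d => ∫⁻ y in closedBall x ε, H y ∂volume)
      = fun x => ∫⁻ y, Set.indicator {q : Eu d × Eu d | dist q.2 q.1 ≤ ε}
          (fun q => H q.2) (x, y) ∂volume := by
    funext x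
    have hind : Set.indicator (closedBall x ε) H
        = fun y => Set.indicator {q : Eu d × Eu d | dist q.2 q.1 ≤ ε} (fun q => H q.2) (x, y) := by
      funext y
      by_cases h : y ∈ closedBall x ε
      · rw [Set.indicator_of_mem h, Set.indicator_of_mem (by simpa [mem_closedBall] using h)]
      · rw [Set.indicator_of_notMem h,
          Set.indicator_of_notMem (by simpa [mem_closedBall] using h)]
    rw [← lintegral_indicator measurableSet_closedBall, hind]
  rw [heq]
  exact hm.lintegral_prod_right'

lemma lintegral_ballLInt {H : Eu d → ℝ≥0∞} (hH : Measurable H) (ε : ℝ) :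
    ∫⁻ x, (∫⁻ y in closedBall x ε, H y ∂volume) ∂volume = BB d ε * ∫⁻ y, H y ∂volume := by
  have hD : MeasurableSet {q : Eu d × Eu d | dist q.2 q.1 ≤ ε} :=
    (isClosed_le (continuous_snd.dist continuous_fst) continuous_const).measurableSet
  have h1 : ∀ x : Eu d, ∫⁻ y in closedBall x ε, H y ∂volume
      = ∫⁻ y, Set.indicator {q : Eu d × Eu d | dist q.2 q.1 ≤ ε}
          (fun q => H q.2) (x, y) ∂volume := by
    intro x
    have hind : Set.indicator (closedBall x ε) H
        = fun y => Set.indicator {q : Eu d × Eu d | dist q.2 q.1 ≤ ε} (fun q => H q.2) (x, y) := by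
      funext y
      by_cases h : y ∈ closedBall x ε
      · rw [Set.indicator_of_mem h, Set.indicator_of_mem (by simpa [mem_closedBall] using h)]
      · rw [Set.indicator_of_notMem h,
          Set.indicator_of_notMem (by simpa [mem_closedBall] using h)]
    rw [← lintegral_indicator measurableSet_closedBall, hind]
  simp_rw [h1]
  rw [lintegral_lintegral_swap (f := fun x y => Set.indicator
    {q : Eu d × Eu d | dist q.2 q.1 ≤ ε} (fun q => H q.2) (x, y))
    (((hH.comp measurable_snd).indicator hD).aemeasurable)]
  have h2 : ∀ y : Eu d, ∫⁻ x, Set.indicator {q : Eu d × Eu d | dist q.2 q.1 ≤ ε}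
      (fun q => H q.2) (x, y) ∂volume = H y * BB d ε := by
    intro y
    have h3 : ∀ x : Eu d, Set.indicator {q : Eu d × Eu d | dist q.2 q.1 ≤ ε}
        (fun q => H q.2) (x, y) = Set.indicator (closedBall y ε) (fun _ => H y) x := by
      intro x
      by_cases h : x ∈ closedBall y ε
      · rw [Set.indicator_of_mem h, Set.indicator_of_mem]
        simpa [mem_closedBall, dist_comm] using h
      · rw [Set.indicator_of_notMem h, Set.indicator_of_notMem]
        simpa [mem_closedBall, dist_comm] using h
    simp_rw [h3]
    rw [lintegral_indicator measurableSet_closedBall, setLIntegral_const,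
      vol_closedBall]
  simp_rw [h2]
  rw [lintegral_mul_const'' _ hH.aemeasurable, mul_comm]

lemma ofReal_av_le {f : Eu d → ℝ} {ε : ℝ} (hε : 0 < ε) (x : Eu d) :
    ENNReal.ofReal |av f ε x| ≤
      (∫⁻ y in closedBall x ε, ENNReal.ofReal |f y| ∂volume) / BB d ε := by
  have hb : 0 < (BB d ε).toReal :=
    ENNReal.toReal_pos (BB_ne_zero hε) (BB_ne_top ε)
  have h1 : |av f ε x| = |∫ y in closedBall x ε, f y| / (BB d ε).toReal := by
    rw [av, abs_div, abs_of_pos hb]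
  rw [h1, ENNReal.ofReal_div_of_pos hb, ENNReal.ofReal_toReal (BB_ne_top ε)]
  gcongr
  calc ENNReal.ofReal |∫ y in closedBall x ε, f y|
      ≤ ENNReal.ofReal (∫ y in closedBall x ε, |f y|) := by
        gcongr
        simpa [Real.norm_eq_abs] using
          norm_integral_le_integral_norm (μ := volume.restrict (closedBall x ε)) f
    _ ≤ ∫⁻ y in closedBall x ε, ENNReal.ofReal |f y| ∂volume := by
        by_cases hI : IntegrableOn (fun y => |f y|) (closedBall x ε) volume
        · rw [ofReal_integral_eq_lintegral_ofReal hI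
            (Filter.Eventually.of_forall fun y => abs_nonneg _)]
        · rw [integral_undef hI]; simp

lemma lintegral_av_cube_le {f : Eu d → ℝ} (hf : Measurable f) {ε : ℝ} (hε : 0 < ε) :
    ∫⁻ x, ENNReal.ofReal |av f ε x| ^ (3 : ℝ) ∂volume
      ≤ ∫⁻ x, ENNReal.ofReal |f x| ^ (3 : ℝ) ∂volume := by
  set B := BB d ε with hBdef
  have hB0 : B ≠ 0 := BB_ne_zero hε
  have hBt : B ≠ ⊤ := BB_ne_top ε
  set h : Eu d → ℝ≥0∞ := fun y => ENNReal.ofReal |f y| with hh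
  have hhm : Measurable h := ENNReal.measurable_ofReal.comp hf.abs
  have jensen : ∀ x : Eu d, (∫⁻ y in closedBall x ε, h y ∂volume) ^ (3 : ℝ)
      ≤ (∫⁻ y in closedBall x ε, h y ^ (3 : ℝ) ∂volume) * B ^ (2 : ℝ) := by
    intro x
    have hold := ENNReal.lintegral_mul_le_Lp_mul_Lq (volume.restrict (closedBall x ε))
      (⟨by norm_num, by norm_num, by norm_num⟩ : Real.HolderConjugate 3 (3 / 2))
      hhm.aemeasurable (aemeasurable_const (b := (1 : ℝ≥0∞)))
    simp only [mul_one, one_mul, Pi.mul_apply, ENNReal.one_rpow, lintegral_const,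
      Measure.restrict_apply_univ] at hold
    rw [vol_closedBall, ← hBdef] at hold
    calc (∫⁻ y in closedBall x ε, h y ∂volume) ^ (3 : ℝ)
        ≤ ((∫⁻ y in closedBall x ε, h y ^ (3 : ℝ) ∂volume) ^ (1 / 3 : ℝ)
            * B ^ (1 / (3 / 2) : ℝ)) ^ (3 : ℝ) :=
          ENNReal.rpow_le_rpow hold (by norm_num)
      _ = (∫⁻ y in closedBall x ε, h y ^ (3 : ℝ) ∂volume) * B ^ (2 : ℝ) := by
          rw [ENNReal.mul_rpow_of_nonneg _ _ (by norm_num), ← ENNReal.rpow_mul,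
            ← ENNReal.rpow_mul]
          norm_num
  calc ∫⁻ x, ENNReal.ofReal |av f ε x| ^ (3 : ℝ) ∂volume
      ≤ ∫⁻ x, ((∫⁻ y in closedBall x ε, h y ∂volume) / B) ^ (3 : ℝ) ∂volume :=
        lintegral_mono fun x => ENNReal.rpow_le_rpow (ofReal_av_le hε x) (by norm_num)
    _ ≤ ∫⁻ x, (∫⁻ y in closedBall x ε, h y ^ (3 : ℝ) ∂volume) / B ∂volume := by
        refine lintegral_mono fun x => ?_
        rw [ENNReal.div_rpow_of_nonneg _ _ (by norm_num)]
        have hB3 : B ^ (3 : ℝ) = B * B ^ (2 : ℝ) := by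
          rw [show (3 : ℝ) = 1 + 2 by norm_num, ENNReal.rpow_add _ _ hB0 hBt,
            ENNReal.rpow_one]
        rw [hB3]
        calc (∫⁻ y in closedBall x ε, h y ∂volume) ^ (3 : ℝ) / (B * B ^ (2 : ℝ))
            ≤ ((∫⁻ y in closedBall x ε, h y ^ (3 : ℝ) ∂volume) * B ^ (2 : ℝ))
                / (B * B ^ (2 : ℝ)) := by gcongr; exact jensen x
          _ = (∫⁻ y in closedBall x ε, h y ^ (3 : ℝ) ∂volume) / B := by
              have hc0 : B ^ (2 : ℝ) ≠ 0 := (ENNReal.rpow_pos (pos_iff_ne_zero.2 hB0) hBt).ne'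
              have hct : B ^ (2 : ℝ) ≠ ⊤ := ENNReal.rpow_ne_top_of_nonneg (by norm_num) hBt
              exact ENNReal.mul_div_mul_right (c := B ^ (2 : ℝ)) _ _ hc0 hct
    _ = ∫⁻ x, (∫⁻ y in closedBall x ε, h y ^ (3 : ℝ) ∂volume) * B⁻¹ ∂volume := by
        simp_rw [div_eq_mul_inv]
    _ = (B * ∫⁻ y, h y ^ (3 : ℝ) ∂volume) * B⁻¹ := by
        rw [lintegral_mul_const'' _ (measurable_ballLInt (hhm.pow_const _) ε).aemeasurable,
          lintegral_ballLInt (hhm.pow_const _) ε]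
    _ = ∫⁻ x, ENNReal.ofReal |f x| ^ (3 : ℝ) ∂volume := by
        rw [mul_comm B _, mul_assoc, ENNReal.mul_inv_cancel hB0 hBt, mul_one]

lemma eLpNorm3_eq (u : Eu d → ℝ) :
    eLpNorm u 3 volume = (∫⁻ x, ENNReal.ofReal |u x| ^ (3 : ℝ) ∂volume) ^ (1 / 3 : ℝ) := by
  rw [eLpNorm_eq_lintegral_rpow_enorm_toReal (by norm_num) (by norm_num)]
  simp_rw [Real.enorm_eq_ofReal_abs]
  norm_num

lemma eLpNorm_av_le {f : Eu d → ℝ} (hf : Measurable f) {ε : ℝ} (hε : 0 < ε) :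
    eLpNorm (av f ε) 3 volume ≤ eLpNorm f 3 volume := by
  rw [eLpNorm3_eq, eLpNorm3_eq]
  exact ENNReal.rpow_le_rpow (lintegral_av_cube_le hf hε) (by norm_num)

lemma abs_av_sub_le {g : Eu d → ℝ} (hg : Continuous g) {ε : ℝ} (hε : 0 < ε)
    {x : Eu d} {η : ℝ} (hη : ∀ y ∈ closedBall x ε, |g y - g x| ≤ η) :
    |av g ε x - g x| ≤ η := by
  have hb : 0 < (BB d ε).toReal := ENNReal.toReal_pos (BB_ne_zero hε) (BB_ne_top ε)
  have hvol : volume (closedBall x ε) = BB d ε := vol_closedBall x ε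
  have hgint : IntegrableOn g (closedBall x ε) volume :=
    hg.continuousOn.integrableOn_compact (isCompact_closedBall x ε)
  have hcint : IntegrableOn (fun _ => g x) (closedBall x ε) volume :=
    integrableOn_const (by rw [hvol]; exact BB_ne_top ε)
  have h1 : av g ε x - g x
      = (∫ y in closedBall x ε, (g y - g x)) / (BB d ε).toReal := by
    rw [integral_sub hgint hcint, setIntegral_const, measureReal_def, hvol, smul_eq_mul, sub_div, av]
    rw [mul_comm, mul_div_assoc, div_self hb.ne', mul_one]
  rw [h1, abs_div, abs_of_pos hb, div_le_iff₀ hb]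
  calc |∫ y in closedBall x ε, (g y - g x)|
      ≤ ∫ y in closedBall x ε, |g y - g x| := by
        simpa [Real.norm_eq_abs] using
          norm_integral_le_integral_norm (μ := volume.restrict (closedBall x ε))
            (fun y => g y - g x)
    _ ≤ ∫ y in closedBall x ε, η := by
        refine setIntegral_mono_on ((hgint.sub hcint).abs) ?_
          measurableSet_closedBall hη
        exact integrableOn_const (by rw [hvol]; exact BB_ne_top ε)
    _ = η * (BB d ε).toReal := by rw [setIntegral_const, measureReal_def, hvol, smul_eq_mul, mul_comm]

lemma tendsto_av_cont {g : Eu d → ℝ} (hg : Continuous g) (hgs : HasCompactSupport g) :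
    Tendsto (fun ε => ∫⁻ x, ENNReal.ofReal |av g ε x - g x| ^ (3 : ℝ) ∂volume)
      (𝓝[>] (0 : ℝ)) (𝓝 0) := by
  obtain ⟨M, hM⟩ := hg.bounded_above_of_compact_support hgs
  have hM0 : 0 ≤ M := le_trans (norm_nonneg (g 0)) (hM 0)
  set K := cthickening 1 (tsupport g) with hK
  have hKc : IsCompact K := hgs.cthickening
  -- a.e. pointwise convergence
  have hptw : ∀ x : Eu d, Tendsto (fun ε => av g ε x) (𝓝[>] (0 : ℝ)) (𝓝 (g x)) := by
    intro x
    rw [Metric.tendsto_nhdsWithin_nhds]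
    intro η hη
    obtain ⟨δ, hδ, hδ'⟩ := Metric.uniformContinuous_iff.1
      (hgs.uniformContinuous_of_continuous hg) (η / 2) (by positivity)
    refine ⟨δ, hδ, fun {ε} hε hεδ => ?_⟩
    have hε' : 0 < ε := hε
    have hb : ∀ y ∈ closedBall x ε, |g y - g x| ≤ η / 2 := by
      intro y hy
      have : dist y x < δ := lt_of_le_of_lt (mem_closedBall.1 hy)
        (by rw [Real.dist_eq, sub_zero, abs_of_pos hε'] at hεδ; linarith)
      exact (le_of_lt (by simpa [Real.dist_eq] using hδ' this))
    have := abs_av_sub_le hg hε' hb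
    rw [Real.dist_eq]
    calc |av g ε x - g x| ≤ η / 2 := this
      _ < η := by linarith
  -- support of the difference
  have hsupp : ∀ {ε : ℝ}, 0 < ε → ε ≤ 1 → ∀ x ∉ K, av g ε x - g x = 0 := by
    intro ε hε hε1 x hx
    have hgx : g x = 0 :=
      image_eq_zero_of_notMem_tsupport fun hmem => hx (self_subset_cthickening _ hmem)
    have hball : ∀ y ∈ closedBall x ε, g y = 0 := by
      intro y hy
      by_contra hgy
      exact hx (mem_cthickening_of_dist_le x y 1 _ (subset_tsupport g hgy)
        (le_trans (by simpa [dist_comm] using mem_closedBall.1 hy) hε1))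
    have : ∫ y in closedBall x ε, g y = 0 := by
      rw [setIntegral_congr_fun measurableSet_closedBall hball, integral_zero]
    rw [av, this, zero_div, hgx, sub_zero]
  -- uniform bound
  have hbdd : ∀ {ε : ℝ}, 0 < ε → ∀ x : Eu d, |av g ε x - g x| ≤ 2 * M := by
    intro ε hε x
    have hb : 0 < (BB d ε).toReal := ENNReal.toReal_pos (BB_ne_zero hε) (BB_ne_top ε)
    have hvol : volume (closedBall x ε) = BB d ε := vol_closedBall x ε
    have hgint : IntegrableOn g (closedBall x ε) volume :=
      hg.continuousOn.integrableOn_compact (isCompact_closedBall x ε)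
    have h1 : |av g ε x| ≤ M := by
      rw [av, abs_div, abs_of_pos hb, div_le_iff₀ hb]
      calc |∫ y in closedBall x ε, g y|
          ≤ ∫ y in closedBall x ε, |g y| := by
            simpa [Real.norm_eq_abs] using
              norm_integral_le_integral_norm (μ := volume.restrict (closedBall x ε)) g
        _ ≤ ∫ y in closedBall x ε, M := by
            refine setIntegral_mono_on hgint.abs
              (integrableOn_const (by rw [hvol]; exact BB_ne_top ε))
              measurableSet_closedBall fun y _ => by simpa [Real.norm_eq_abs] using hM y
        _ = M * (BB d ε).toReal := by rw [setIntegral_const, measureReal_def, hvol, smul_eq_mul, mul_comm]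
    calc |av g ε x - g x| ≤ |av g ε x| + |g x| := abs_sub _ _
      _ ≤ M + M := add_le_add h1 (by simpa [Real.norm_eq_abs] using hM x)
      _ = 2 * M := by ring
  -- dominated convergence
  have h0 : (0 : ℝ≥0∞) = ∫⁻ _x : Eu d, 0 ∂volume := by simp
  rw [h0]
  refine tendsto_lintegral_filter_of_dominated_convergence
    (K.indicator fun _ => ENNReal.ofReal (2 * M) ^ (3 : ℝ)) ?_ ?_ ?_ ?_
  · exact Filter.Eventually.of_forall fun ε =>
      ((((measurable_av hg.measurable ε).sub hg.measurable).abs).ennreal_ofReal).pow_const _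
  · filter_upwards [Ioc_mem_nhdsGT_of_mem (Set.mem_Ico.2 ⟨le_refl (0:ℝ), one_pos⟩)]
      with ε hε
    refine Filter.Eventually.of_forall fun x => ?_
    by_cases hx : x ∈ K
    · rw [Set.indicator_of_mem hx]
      exact ENNReal.rpow_le_rpow (ENNReal.ofReal_le_ofReal (hbdd hε.1 x)) (by norm_num)
    · rw [Set.indicator_of_notMem hx, hsupp hε.1 hε.2 x hx]
      simp [ENNReal.zero_rpow_of_pos]
  · rw [lintegral_indicator hKc.measurableSet, setLIntegral_const]
    exact ENNReal.mul_ne_top (ENNReal.rpow_ne_top_of_nonneg (by norm_num)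
      ENNReal.ofReal_ne_top) hKc.measure_lt_top.ne
  · refine Filter.Eventually.of_forall fun x => ?_
    have h1 : Tendsto (fun ε => av g ε x - g x) (𝓝[>] (0:ℝ)) (𝓝 0) := by
      simpa using (hptw x).sub (tendsto_const_nhds (x := g x))
    have h2 : Tendsto (fun ε => ENNReal.ofReal |av g ε x - g x|) (𝓝[>] (0:ℝ)) (𝓝 0) := by
      have ha : Tendsto (fun ε => |av g ε x - g x|) (𝓝[>] (0:ℝ)) (𝓝 0) := by
        simpa [Function.comp_def] using (continuous_abs.tendsto 0).comp h1
      simpa [Function.comp_def] using (ENNReal.continuous_ofReal.tendsto 0).comp ha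
    have h3 := ((ENNReal.continuous_rpow_const (y := (3:ℝ))).tendsto 0).comp h2
    simpa [Function.comp_def, ENNReal.zero_rpow_of_pos] using h3

variable {p : Eu d → ℝ}

lemma lint_q3 (hpn : ∀ x, 0 ≤ p x) (hp3 : Integrable fun x => p x ^ 3) :
    ∫⁻ x, ENNReal.ofReal (p x) ^ (3 : ℝ) ∂volume = ENNReal.ofReal (∫ x, p x ^ 3) := by
  have e : ∀ x, ENNReal.ofReal (p x) ^ (3 : ℝ) = ENNReal.ofReal (p x ^ 3) := by
    intro x
    rw [ENNReal.ofReal_rpow_of_nonneg (hpn x) (by norm_num)]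
    congr 1
    rw [show (3 : ℝ) = ((3 : ℕ) : ℝ) by norm_num, Real.rpow_natCast]
  simp_rw [e]
  rw [← ofReal_integral_eq_lintegral_ofReal hp3
    (Filter.Eventually.of_forall fun x => pow_nonneg (hpn x) 3)]

lemma memp3 (hpm : Measurable p) (hpn : ∀ x, 0 ≤ p x)
    (hp3 : Integrable fun x => p x ^ 3) : MemLp p 3 volume := by
  refine ⟨hpm.aestronglyMeasurable, ?_⟩
  rw [eLpNorm3_eq]
  refine ENNReal.rpow_lt_top_of_nonneg (by norm_num) ?_
  have e : ∀ x : Eu d, ENNReal.ofReal |p x| = ENNReal.ofReal (p x) := fun x => by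
    rw [abs_of_nonneg (hpn x)]
  simp_rw [e]
  rw [lint_q3 hpn hp3]
  exact ENNReal.ofReal_ne_top

lemma weighted (hpn : ∀ x, 0 ≤ p x) (hpm : Measurable p)
    (hp3 : Integrable fun x => p x ^ 3) {u : Eu d → ℝ} (hu : Measurable u) :
    ∫⁻ x, ENNReal.ofReal (p x) * ENNReal.ofReal |u x| ^ (2 : ℝ) ∂volume
      ≤ (ENNReal.ofReal (∫ x, p x ^ 3)) ^ (1 / 3 : ℝ) * eLpNorm u 3 volume ^ (2 : ℝ) := by
  have hH := ENNReal.lintegral_mul_le_Lp_mul_Lq volume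
    (⟨by norm_num, by norm_num, by norm_num⟩ : Real.HolderConjugate 3 (3 / 2))
    (ENNReal.measurable_ofReal.comp hpm).aemeasurable
    (((ENNReal.measurable_ofReal.comp hu.abs).pow_const (2 : ℝ)).aemeasurable)
  simp only [Pi.mul_apply] at hH
  have e1 : ∀ x : Eu d, (ENNReal.ofReal |u x| ^ (2 : ℝ)) ^ (3 / 2 : ℝ)
      = ENNReal.ofReal |u x| ^ (3 : ℝ) := fun x => by
    rw [← ENNReal.rpow_mul]; norm_num
  have e2 : eLpNorm u 3 volume ^ (2 : ℝ)
      = (∫⁻ x, ENNReal.ofReal |u x| ^ (3 : ℝ) ∂volume) ^ (1 / (3 / 2) : ℝ) := by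
    rw [eLpNorm3_eq, ← ENNReal.rpow_mul]; norm_num
  calc ∫⁻ x, ENNReal.ofReal (p x) * ENNReal.ofReal |u x| ^ (2 : ℝ) ∂volume
      ≤ (∫⁻ x, ENNReal.ofReal (p x) ^ (3 : ℝ) ∂volume) ^ (1 / 3 : ℝ)
        * (∫⁻ x, (ENNReal.ofReal |u x| ^ (2 : ℝ)) ^ (3 / 2 : ℝ) ∂volume) ^ (1 / (3 / 2) : ℝ) := hH
    _ = (ENNReal.ofReal (∫ x, p x ^ 3)) ^ (1 / 3 : ℝ) * eLpNorm u 3 volume ^ (2 : ℝ) := by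
        simp_rw [e1]
        rw [lint_q3 hpn hp3, e2]

lemma lint_comp {Ω : Type*} [MeasurableSpace Ω] {P : Measure Ω} {X : Ω → Eu d}
    (hpm : Measurable p) (hX : Measurable X)
    (hmap : Measure.map X P = volume.withDensity fun x => ENNReal.ofReal (p x))
    {Φ : Eu d → ℝ≥0∞} (hΦ : Measurable Φ) :
    ∫⁻ ω, Φ (X ω) ∂P = ∫⁻ x, ENNReal.ofReal (p x) * Φ x ∂volume := by
  rw [← lintegral_map hΦ hX, hmap,
    lintegral_withDensity_eq_lintegral_mul _ (hpm.ennreal_ofReal) hΦ]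
  rfl

lemma tendsto_eLpNorm_av (hpm : Measurable p) (hpn : ∀ x, 0 ≤ p x)
    (hpi : Integrable p) (hp3 : Integrable fun x => p x ^ 3) :
    Tendsto (fun ε => eLpNorm (fun x => av p ε x - p x) 3 volume)
      (𝓝[>] (0 : ℝ)) (𝓝 0) := by
  have hmem : MemLp p 3 volume := memp3 hpm hpn hp3
  rw [ENNReal.tendsto_nhds_zero]
  intro δ hδ
  rcases eq_or_ne δ ⊤ with rfl | hδt
  · exact Filter.Eventually.of_forall fun _ => le_top
  have hδ4 : (δ / 4 : ℝ≥0∞) ≠ 0 := by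
    simp only [ne_eq, ENNReal.div_eq_zero_iff, not_or]
    exact ⟨hδ.ne', by norm_num⟩
  have hδ4t : (δ / 4 : ℝ≥0∞) ≠ ⊤ := (ENNReal.div_lt_top hδt (by norm_num)).ne
  obtain ⟨g, hgs, hpg, hgc, hgmem⟩ :=
    hmem.exists_hasCompactSupport_eLpNorm_sub_le (by norm_num : (3 : ℝ≥0∞) ≠ ⊤) hδ4
  have hgten0 := tendsto_av_cont hgc hgs
  have hgten : Tendsto (fun ε => eLpNorm (fun x => av g ε x - g x) 3 volume)
      (𝓝[>] (0 : ℝ)) (𝓝 0) := by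
    have h3 := ((ENNReal.continuous_rpow_const (y := (1 / 3 : ℝ))).tendsto 0).comp hgten0
    simp only [Function.comp_def] at h3
    have h4 : ((0 : ℝ≥0∞)) ^ (1 / 3 : ℝ) = 0 := ENNReal.zero_rpow_of_pos (by norm_num)
    rw [h4] at h3
    refine h3.congr fun ε => ?_
    rw [eLpNorm3_eq]
  have hev := (ENNReal.tendsto_nhds_zero.1 hgten) (δ / 4)
    (pos_iff_ne_zero.2 hδ4)
  filter_upwards [hev, self_mem_nhdsWithin] with ε h1 h2
  have hε : (0 : ℝ) < ε := h2
  have hgint : ∀ x : Eu d, IntegrableOn g (closedBall x ε) volume := fun x =>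
    hgc.continuousOn.integrableOn_compact (isCompact_closedBall x ε)
  have hdecomp : (fun x => av p ε x - p x)
      = (fun x => av (fun y => p y - g y) ε x) + ((fun x => av g ε x - g x)
        + fun x => g x - p x) := by
    funext x
    simp only [Pi.add_apply, av]
    rw [integral_sub (hpi.integrableOn) (hgint x), sub_div]
    ring
  have m1 : AEStronglyMeasurable (fun x => av (fun y => p y - g y) ε x) volume :=
    (measurable_av (hpm.sub hgc.measurable) ε).aestronglyMeasurable
  have m2 : AEStronglyMeasurable (fun x => av g ε x - g x) volume :=
    ((measurable_av hgc.measurable ε).sub hgc.measurable).aestronglyMeasurable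
  have m3 : AEStronglyMeasurable (fun x : Eu d => g x - p x) volume :=
    (hgc.measurable.sub hpm).aestronglyMeasurable
  rw [hdecomp]
  have hpg' : eLpNorm (fun y => p y - g y) 3 volume ≤ δ / 4 := hpg
  calc eLpNorm ((fun x => av (fun y => p y - g y) ε x) + ((fun x => av g ε x - g x)
        + fun x => g x - p x)) 3 volume
      ≤ eLpNorm (fun x => av (fun y => p y - g y) ε x) 3 volume
        + eLpNorm ((fun x => av g ε x - g x) + fun x => g x - p x) 3 volume :=
        eLpNorm_add_le m1 (m2.add m3) (by norm_num)
    _ ≤ eLpNorm (fun x => av (fun y => p y - g y) ε x) 3 volume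
        + (eLpNorm (fun x => av g ε x - g x) 3 volume
          + eLpNorm (fun x : Eu d => g x - p x) 3 volume) :=
        add_le_add_right (eLpNorm_add_le m2 m3 (by norm_num)) _
    _ ≤ δ / 4 + (δ / 4 + δ / 4) := by
        refine add_le_add (le_trans (eLpNorm_av_le (hpm.sub hgc.measurable) hε) hpg')
          (add_le_add h1 ?_)
        calc eLpNorm (fun x : Eu d => g x - p x) 3 volume
            = eLpNorm (fun x : Eu d => p x - g x) 3 volume := eLpNorm_sub_comm g p 3 volume
          _ ≤ δ / 4 := hpg'
    _ ≤ δ := by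
        rw [ENNReal.div_add_div_same, ENNReal.div_add_div_same]
        calc (δ + (δ + δ)) / 4 ≤ (δ * 4) / 4 := by
              apply ENNReal.div_le_div_right
              calc δ + (δ + δ) ≤ δ + (δ + δ) + δ := le_self_add
                _ = δ * 4 := by ring
          _ = δ := by
              rw [mul_div_assoc, ENNReal.div_self (by norm_num) (by norm_num), mul_one]

end

end Stmt7Aux

/-- If the common marginal density `p` of `X₁, X₂` is in `L³(ℝ^d)` (and `L²`), then
`E[p_{X,ε}(X₁) p_{X,ε}(X₂)]/b_ε(d)² → E[p(X₁)p(X₂)]` as `ε → 0⁺`, where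
`p_{X,ε}(x) = ∫_{B_ε(x)} p` is the ε-ball probability, provided all the
expectations are well defined. -/
theorem stmt_7 (d : ℕ) (hd : 0 < d) {Ω : Type*} [MeasurableSpace Ω]
    (P : Measure Ω) [IsProbabilityMeasure P]
    (X1 X2 : Ω → EuclideanSpace ℝ (Fin d)) (hX1 : Measurable X1) (hX2 : Measurable X2)
    (p : EuclideanSpace ℝ (Fin d) → ℝ) (hpm : Measurable p) (hpn : ∀ x, 0 ≤ p x)
    (hpi : Integrable p) (hp1 : ∫ x, p x = 1)
    (hp2 : Integrable (fun x => p x ^ 2)) (hp3 : Integrable (fun x => p x ^ 3))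
    (hd1 : Measure.map X1 P = volume.withDensity (fun x => ENNReal.ofReal (p x)))
    (hd2 : Measure.map X2 P = volume.withDensity (fun x => ENNReal.ofReal (p x)))
    (hint : Integrable (fun ω => p (X1 ω) * p (X2 ω)) P)
    (hintε : ∀ ε : ℝ, 0 < ε → Integrable (fun ω =>
      (∫ y in Metric.closedBall (X1 ω) ε, p y) * ∫ y in Metric.closedBall (X2 ω) ε, p y) P) :
    Tendsto (fun ε : ℝ =>
        (∫ ω, (∫ y in Metric.closedBall (X1 ω) ε, p y) *
            (∫ y in Metric.closedBall (X2 ω) ε, p y) ∂P) /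
          ((volume (Metric.closedBall (0 : EuclideanSpace ℝ (Fin d)) ε)).toReal) ^ 2)
      (nhdsWithin 0 (Set.Ioi 0)) (𝓝 (∫ ω, p (X1 ω) * p (X2 ω) ∂P)) := by
  classical
  open Stmt7Aux Metric in
  have hS := Stmt7Aux.tendsto_eLpNorm_av hpm hpn hpi hp3
  open Stmt7Aux Metric in
  set C3 : ℝ≥0∞ := (ENNReal.ofReal (∫ x, p x ^ 3)) ^ (1/3 : ℝ) with hC3def
  have hC3t : C3 ≠ ⊤ := ENNReal.rpow_ne_top_of_nonneg (by norm_num) ENNReal.ofReal_ne_top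
  have hNp : eLpNorm p 3 volume ≠ ⊤ := (Stmt7Aux.memp3 hpm hpn hp3).2.ne
  set Kc : ℝ≥0∞ := C3 * eLpNorm p 3 volume ^ (2:ℝ) with hKcdef
  have hKct : Kc ≠ ⊤ :=
    ENNReal.mul_ne_top hC3t (ENNReal.rpow_ne_top_of_nonneg (by norm_num) hNp)
  set D : ℝ → ℝ≥0∞ := fun ε => ∫⁻ x, ENNReal.ofReal (p x)
      * ENNReal.ofReal |Stmt7Aux.av p ε x - p x| ^ (2:ℝ) ∂volume with hDdef
  have hDle : ∀ ε : ℝ, D ε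
      ≤ C3 * (eLpNorm (fun x => Stmt7Aux.av p ε x - p x) 3 volume) ^ (2:ℝ) :=
    fun ε => Stmt7Aux.weighted hpn hpm hp3 ((Stmt7Aux.measurable_av hpm ε).sub hpm)
  have hDten : Tendsto D (𝓝[>] (0:ℝ)) (𝓝 0) := by
    have ha := ((ENNReal.continuous_rpow_const (y := (2:ℝ))).tendsto 0).comp hS
    simp only [Function.comp_def] at ha
    rw [ENNReal.zero_rpow_of_pos (by norm_num)] at ha
    have hb := ENNReal.Tendsto.const_mul ha (Or.inr hC3t)
    rw [mul_zero] at hb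
    exact tendsto_of_tendsto_of_tendsto_of_le_of_le tendsto_const_nhds hb
      (fun ε => zero_le) hDle
  set u : ℝ → ℝ≥0∞ := fun ε => D ε ^ (1/2:ℝ) * Kc ^ (1/2:ℝ)
      + Kc ^ (1/2:ℝ) * D ε ^ (1/2:ℝ) with hudef
  have hKc2t : Kc ^ (1/2:ℝ) ≠ ⊤ := ENNReal.rpow_ne_top_of_nonneg (by norm_num) hKct
  -- the key error bound for each positive ε
  have key : ∀ ε : ℝ, 0 < ε →
      dist ((∫ ω, (∫ y in Metric.closedBall (X1 ω) ε, p y) *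
            (∫ y in Metric.closedBall (X2 ω) ε, p y) ∂P) /
          ((volume (Metric.closedBall (0 : EuclideanSpace ℝ (Fin d)) ε)).toReal) ^ 2)
        (∫ ω, p (X1 ω) * p (X2 ω) ∂P) ≤ (u ε).toReal := by
    intro ε hε
    have hb : 0 < (Stmt7Aux.BB d ε).toReal :=
      ENNReal.toReal_pos (Stmt7Aux.BB_ne_zero hε) (Stmt7Aux.BB_ne_top ε)
    -- finiteness of D ε and u ε
    have hSfin : eLpNorm (fun x => Stmt7Aux.av p ε x - p x) 3 volume ≠ ⊤ := by
      refine (lt_of_le_of_lt (eLpNorm_sub_le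
        (Stmt7Aux.measurable_av hpm ε).aestronglyMeasurable
        hpm.aestronglyMeasurable (by norm_num)) ?_).ne
      exact ENNReal.add_lt_top.2
        ⟨lt_of_le_of_lt (Stmt7Aux.eLpNorm_av_le hpm hε) hNp.lt_top, hNp.lt_top⟩
    have hDfin : D ε ≠ ⊤ := by
      refine (lt_of_le_of_lt (hDle ε) ?_).ne
      exact ENNReal.mul_lt_top hC3t.lt_top
        (ENNReal.rpow_ne_top_of_nonneg (by norm_num) hSfin).lt_top
    have hufin : u ε ≠ ⊤ := by
      have hD2t : D ε ^ (1/2:ℝ) ≠ ⊤ := ENNReal.rpow_ne_top_of_nonneg (by norm_num) hDfin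
      simp only [hudef]
      exact ENNReal.add_ne_top.2 ⟨ENNReal.mul_ne_top hD2t hKc2t,
        ENNReal.mul_ne_top hKc2t hD2t⟩
    -- rewrite the quotient as the integral of products of averages
    have hptwise : ∀ ω, ((∫ y in Metric.closedBall (X1 ω) ε, p y) *
          ∫ y in Metric.closedBall (X2 ω) ε, p y) /
          ((volume (Metric.closedBall (0 : EuclideanSpace ℝ (Fin d)) ε)).toReal) ^ 2
        = Stmt7Aux.av p ε (X1 ω) * Stmt7Aux.av p ε (X2 ω) := by
      intro ω
      simp only [Stmt7Aux.av, Stmt7Aux.BB]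
      rw [div_mul_div_comm, ← pow_two]
    have hAeq : (∫ ω, (∫ y in Metric.closedBall (X1 ω) ε, p y) *
          (∫ y in Metric.closedBall (X2 ω) ε, p y) ∂P) /
          ((volume (Metric.closedBall (0 : EuclideanSpace ℝ (Fin d)) ε)).toReal) ^ 2
        = ∫ ω, Stmt7Aux.av p ε (X1 ω) * Stmt7Aux.av p ε (X2 ω) ∂P := by
      rw [← integral_div]
      exact integral_congr_ae (Filter.Eventually.of_forall fun ω => hptwise ω)
    have hIav : Integrable (fun ω => Stmt7Aux.av p ε (X1 ω) * Stmt7Aux.av p ε (X2 ω)) P := by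
      refine ((hintε ε hε).div_const
        (((volume (Metric.closedBall (0 : EuclideanSpace ℝ (Fin d)) ε)).toReal) ^ 2)).congr
        (Filter.Eventually.of_forall fun ω => hptwise ω)
    have hIdiff : Integrable (fun ω => Stmt7Aux.av p ε (X1 ω) * Stmt7Aux.av p ε (X2 ω)
        - p (X1 ω) * p (X2 ω)) P := hIav.sub hint
    rw [Real.dist_eq, hAeq, ← integral_sub hIav hint]
    -- measurability on Ω
    have mav1 : Measurable fun ω => Stmt7Aux.av p ε (X1 ω) :=
      (Stmt7Aux.measurable_av hpm ε).comp hX1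
    have mav2 : Measurable fun ω => Stmt7Aux.av p ε (X2 ω) :=
      (Stmt7Aux.measurable_av hpm ε).comp hX2
    have mp1 : Measurable fun ω => p (X1 ω) := hpm.comp hX1
    have mp2 : Measurable fun ω => p (X2 ω) := hpm.comp hX2
    -- pass to lintegrals
    have habs : |∫ ω, (Stmt7Aux.av p ε (X1 ω) * Stmt7Aux.av p ε (X2 ω)
          - p (X1 ω) * p (X2 ω)) ∂P|
        ≤ (∫⁻ ω, ENNReal.ofReal |Stmt7Aux.av p ε (X1 ω) * Stmt7Aux.av p ε (X2 ω)
          - p (X1 ω) * p (X2 ω)| ∂P).toReal := by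
      have h1 := norm_integral_le_integral_norm (μ := P)
        (fun ω => Stmt7Aux.av p ε (X1 ω) * Stmt7Aux.av p ε (X2 ω) - p (X1 ω) * p (X2 ω))
      simp only [Real.norm_eq_abs] at h1
      have h2 : ∫ ω, |Stmt7Aux.av p ε (X1 ω) * Stmt7Aux.av p ε (X2 ω)
            - p (X1 ω) * p (X2 ω)| ∂P
          = (∫⁻ ω, ENNReal.ofReal |Stmt7Aux.av p ε (X1 ω) * Stmt7Aux.av p ε (X2 ω)
            - p (X1 ω) * p (X2 ω)| ∂P).toReal := by
        rw [← ofReal_integral_eq_lintegral_ofReal hIdiff.abs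
          (Filter.Eventually.of_forall fun ω => abs_nonneg _),
          ENNReal.toReal_ofReal (integral_nonneg fun ω => abs_nonneg _)]
      linarith
    refine le_trans habs (ENNReal.toReal_mono hufin ?_)
    -- pointwise product bound
    have hpt : ∀ ω, ENNReal.ofReal |Stmt7Aux.av p ε (X1 ω) * Stmt7Aux.av p ε (X2 ω)
          - p (X1 ω) * p (X2 ω)|
        ≤ ENNReal.ofReal |Stmt7Aux.av p ε (X1 ω) - p (X1 ω)|
            * ENNReal.ofReal |Stmt7Aux.av p ε (X2 ω)|
          + ENNReal.ofReal |p (X1 ω)|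
            * ENNReal.ofReal |Stmt7Aux.av p ε (X2 ω) - p (X2 ω)| := by
      intro ω
      have e : Stmt7Aux.av p ε (X1 ω) * Stmt7Aux.av p ε (X2 ω) - p (X1 ω) * p (X2 ω)
          = (Stmt7Aux.av p ε (X1 ω) - p (X1 ω)) * Stmt7Aux.av p ε (X2 ω)
            + p (X1 ω) * (Stmt7Aux.av p ε (X2 ω) - p (X2 ω)) := by ring
      calc ENNReal.ofReal |Stmt7Aux.av p ε (X1 ω) * Stmt7Aux.av p ε (X2 ω)
            - p (X1 ω) * p (X2 ω)|
          ≤ ENNReal.ofReal (|Stmt7Aux.av p ε (X1 ω) - p (X1 ω)| * |Stmt7Aux.av p ε (X2 ω)|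
            + |p (X1 ω)| * |Stmt7Aux.av p ε (X2 ω) - p (X2 ω)|) := by
            refine ENNReal.ofReal_le_ofReal ?_
            rw [e]
            refine le_trans (abs_add_le _ _) ?_
            rw [abs_mul, abs_mul]
        _ = _ := by
            rw [ENNReal.ofReal_add (mul_nonneg (abs_nonneg _) (abs_nonneg _))
              (mul_nonneg (abs_nonneg _) (abs_nonneg _)),
              ENNReal.ofReal_mul (abs_nonneg _), ENNReal.ofReal_mul (abs_nonneg _)]
    -- split and apply Cauchy-Schwarz
    have hsplit : ∫⁻ ω, ENNReal.ofReal |Stmt7Aux.av p ε (X1 ω) * Stmt7Aux.av p ε (X2 ω)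
          - p (X1 ω) * p (X2 ω)| ∂P
        ≤ (∫⁻ ω, ENNReal.ofReal |Stmt7Aux.av p ε (X1 ω) - p (X1 ω)|
            * ENNReal.ofReal |Stmt7Aux.av p ε (X2 ω)| ∂P)
          + ∫⁻ ω, ENNReal.ofReal |p (X1 ω)|
            * ENNReal.ofReal |Stmt7Aux.av p ε (X2 ω) - p (X2 ω)| ∂P := by
      refine le_trans (lintegral_mono hpt) ?_
      rw [lintegral_add_left (f := fun ω => ENNReal.ofReal |Stmt7Aux.av p ε (X1 ω) - p (X1 ω)|
          * ENNReal.ofReal |Stmt7Aux.av p ε (X2 ω)|) (((mav1.sub mp1).abs.ennreal_ofReal).mul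
        (mav2.abs.ennreal_ofReal))]
    refine le_trans hsplit ?_
    -- Cauchy-Schwarz for each term
    have hconj : Real.HolderConjugate 2 2 := ⟨by norm_num, by norm_num, by norm_num⟩
    have hCS1 := ENNReal.lintegral_mul_le_Lp_mul_Lq P hconj
      ((mav1.sub mp1).abs.ennreal_ofReal).aemeasurable
      (mav2.abs.ennreal_ofReal).aemeasurable
    have hCS2 := ENNReal.lintegral_mul_le_Lp_mul_Lq P hconj
      (mp1.abs.ennreal_ofReal).aemeasurable
      ((mav2.sub mp2).abs.ennreal_ofReal).aemeasurable
    simp only [Pi.mul_apply] at hCS1 hCS2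
    -- identify the moment integrals via the distributions
    have hT11 : ∫⁻ ω, ENNReal.ofReal |Stmt7Aux.av p ε (X1 ω) - p (X1 ω)| ^ (2:ℝ) ∂P
        = D ε := by
      rw [Stmt7Aux.lint_comp hpm hX1 hd1 (Φ := fun x => ENNReal.ofReal |Stmt7Aux.av p ε x - p x| ^ (2:ℝ))
        (((Stmt7Aux.measurable_av hpm ε).sub hpm).abs.ennreal_ofReal.pow_const _)]
    have hT22 : ∫⁻ ω, ENNReal.ofReal |Stmt7Aux.av p ε (X2 ω) - p (X2 ω)| ^ (2:ℝ) ∂P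
        = D ε := by
      rw [Stmt7Aux.lint_comp hpm hX2 hd2 (Φ := fun x => ENNReal.ofReal |Stmt7Aux.av p ε x - p x| ^ (2:ℝ))
        (((Stmt7Aux.measurable_av hpm ε).sub hpm).abs.ennreal_ofReal.pow_const _)]
    have hT12 : ∫⁻ ω, ENNReal.ofReal |Stmt7Aux.av p ε (X2 ω)| ^ (2:ℝ) ∂P ≤ Kc := by
      rw [Stmt7Aux.lint_comp hpm hX2 hd2
        ((Stmt7Aux.measurable_av hpm ε).abs.ennreal_ofReal.pow_const _)]
      refine le_trans (Stmt7Aux.weighted hpn hpm hp3 (Stmt7Aux.measurable_av hpm ε)) ?_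
      rw [hKcdef, hC3def]
      exact mul_le_mul_right (ENNReal.rpow_le_rpow
        (Stmt7Aux.eLpNorm_av_le hpm hε) (by norm_num)) _
    have hT21 : ∫⁻ ω, ENNReal.ofReal |p (X1 ω)| ^ (2:ℝ) ∂P ≤ Kc := by
      rw [Stmt7Aux.lint_comp hpm hX1 hd1 (hpm.abs.ennreal_ofReal.pow_const _)]
      exact Stmt7Aux.weighted hpn hpm hp3 hpm
    calc (∫⁻ ω, ENNReal.ofReal |Stmt7Aux.av p ε (X1 ω) - p (X1 ω)|
            * ENNReal.ofReal |Stmt7Aux.av p ε (X2 ω)| ∂P)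
          + ∫⁻ ω, ENNReal.ofReal |p (X1 ω)|
            * ENNReal.ofReal |Stmt7Aux.av p ε (X2 ω) - p (X2 ω)| ∂P
        ≤ (∫⁻ ω, ENNReal.ofReal |Stmt7Aux.av p ε (X1 ω) - p (X1 ω)| ^ (2:ℝ) ∂P) ^ (1/2:ℝ)
            * (∫⁻ ω, ENNReal.ofReal |Stmt7Aux.av p ε (X2 ω)| ^ (2:ℝ) ∂P) ^ (1/2:ℝ)
          + (∫⁻ ω, ENNReal.ofReal |p (X1 ω)| ^ (2:ℝ) ∂P) ^ (1/2:ℝ)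
            * (∫⁻ ω, ENNReal.ofReal |Stmt7Aux.av p ε (X2 ω) - p (X2 ω)| ^ (2:ℝ) ∂P) ^ (1/2:ℝ) :=
          add_le_add hCS1 hCS2
      _ ≤ u ε := by
          rw [hT11, hT22]
          refine add_le_add ?_ ?_
          · exact mul_le_mul_right (ENNReal.rpow_le_rpow hT12 (by norm_num)) _
          · exact mul_le_mul_left (ENNReal.rpow_le_rpow hT21 (by norm_num)) _
  -- conclude by squeezing
  rw [tendsto_iff_dist_tendsto_zero]
  have huten : Tendsto (fun ε => (u ε).toReal) (𝓝[>] (0:ℝ)) (𝓝 0) := by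
    have h12 : Tendsto (fun ε => D ε ^ (1/2:ℝ)) (𝓝[>] (0:ℝ)) (𝓝 0) := by
      have := ((ENNReal.continuous_rpow_const (y := (1/2:ℝ))).tendsto 0).comp hDten
      simp only [Function.comp_def] at this
      rwa [ENNReal.zero_rpow_of_pos (by norm_num)] at this
    have t1 := ENNReal.Tendsto.mul_const h12 (Or.inr hKc2t)
    have t2 := ENNReal.Tendsto.const_mul h12 (Or.inr hKc2t)
    rw [zero_mul] at t1
    rw [mul_zero] at t2
    have hu0 : Tendsto u (𝓝[>] (0:ℝ)) (𝓝 0) := by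
      have := t1.add t2
      rw [add_zero] at this
      exact this
    have := (ENNReal.tendsto_toReal (a := 0) (by simp)).comp hu0
    simpa [Function.comp_def] using this
  refine squeeze_zero' (Filter.Eventually.of_forall fun ε => dist_nonneg) ?_ huten
  filter_upwards [self_mem_nhdsWithin] with ε hε
  exact key ε hε
end

section
/- Let p*(x) = A(1 − β(x−μ)^T Σ^{-1}(x−μ)) for x in Ω₀ := {x ∈ ℝ^d : (x−μ)^T Σ^{-1}(x−μ) ≤ 4+d} and p*(x) = 0 otherwise, where β = 1/(4+d), A = Γ(2+d/2) β^{d/2} / (π^{d/2} |Σ|^{1/2}), Σ a symmetric positive-definite d×d matrix, and μ ∈ ℝ^d. Then p* is a probability density, and its quadratic Rényi entropy equals h₂(P*) = −log( 2 Γ(2+d/2)² β^{d/2} / (Γ(3+d/2) π^{d/2} |Σ|^{1/2}) ). -/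
open MeasureTheory Real Matrix

private lemma radialE (d : ℕ) (hd : 0 < d) (f : ℝ → ℝ) :
    ∫ x : EuclideanSpace ℝ (Fin d), f ‖x‖ =
    (d : ℝ) * (Real.sqrt π ^ d / Real.Gamma (d/2+1)) * ∫ r in Set.Ioi (0:ℝ), r^(d-1) * f r := by
  haveI : Nonempty (Fin d) := ⟨⟨0, hd⟩⟩
  rw [integral_fun_norm_addHaar volume f]
  rw [measureReal_def, EuclideanSpace.volume_ball (Fin d) 0 1]
  simp [finrank_euclideanSpace, ENNReal.toReal_ofReal
    (by positivity : (0:ℝ) ≤ Real.sqrt π ^ (Fintype.card (Fin d)) / Real.Gamma ((Fintype.card (Fin d))/2+1)),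
    smul_eq_mul, mul_assoc]
  exact Or.inl (Or.inl (by positivity))

private lemma matrixCoV (d : ℕ) (g : (Fin d → ℝ) → ℝ) (hg : Measurable g)
    (B : Matrix (Fin d) (Fin d) ℝ) (hB : B.det ≠ 0) :
    ∫ x, g x = |B.det| * ∫ u, g (B *ᵥ u) := by
  have hL : LinearMap.det (Matrix.toLin' B) = B.det := LinearMap.det_toLin' B
  have hmap := Measure.map_linearMap_addHaar_eq_smul_addHaar (volume : Measure (Fin d → ℝ))
    (f := Matrix.toLin' B) (by rw [hL]; exact hB)
  have h1 : ∫ u, g (B *ᵥ u) = ∫ y, g y ∂(Measure.map (Matrix.toLin' B) volume) := by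
    rw [integral_map (by fun_prop) hg.aestronglyMeasurable]
    simp [Matrix.toLin'_apply]
  rw [h1, hmap, integral_smul_measure, ENNReal.toReal_ofReal (abs_nonneg _), hL, abs_inv,
    smul_eq_mul, ← mul_assoc, mul_inv_cancel₀ (by simpa using hB), one_mul]

open scoped MatrixOrder in
private lemma keyCoV (d : ℕ) (hd : 0 < d) (μv : Fin d → ℝ) (S : Matrix (Fin d) (Fin d) ℝ)
    (hS : S.PosDef) (f : ℝ → ℝ) (hf : Continuous f) :
    ∫ x : Fin d → ℝ, f ((x - μv) ⬝ᵥ (S⁻¹ *ᵥ (x - μv))) =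
    Real.sqrt S.det * ((d : ℝ) * (Real.sqrt π ^ d / Real.Gamma (d/2+1)) *
      ∫ r in Set.Ioi (0:ℝ), r^(d-1) * f (r^2)) := by
  have h0 : ∫ x : Fin d → ℝ, f ((x - μv) ⬝ᵥ (S⁻¹ *ᵥ (x - μv))) =
      ∫ x : Fin d → ℝ, f (x ⬝ᵥ (S⁻¹ *ᵥ x)) :=
    integral_sub_right_eq_self (fun x => f (x ⬝ᵥ (S⁻¹ *ᵥ x))) μv
  set B := CFC.sqrt S with hB
  have hBB : B * B = S := CFC.sqrt_mul_sqrt_self S hS.posSemidef.nonneg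
  have hBnn : 0 ≤ B.det := by
    rw [(CFC.sqrt_nonneg S).posSemidef.isHermitian.det_eq_prod_eigenvalues]
    exact Finset.prod_nonneg fun i _ => (CFC.sqrt_nonneg S).posSemidef.eigenvalues_nonneg i
  have hdet : B.det = Real.sqrt S.det := by
    rw [← hBB, det_mul, ← Real.sqrt_mul_self hBnn, Real.sqrt_mul_self hBnn,
      Real.sqrt_mul_self hBnn]
  have hSdet : 0 < S.det := hS.det_pos
  have hBpos : 0 < B.det := by rw [hdet]; exact Real.sqrt_pos.2 hSdet
  have hBsym : Bᵀ = B := by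
    have := (CFC.sqrt_nonneg S).posSemidef.isHermitian
    rw [Matrix.IsHermitian, Matrix.conjTranspose_eq_transpose_of_trivial] at this
    exact this
  have hBu : IsUnit B.det := hBpos.ne'.isUnit
  have hquad : B * (S⁻¹ * B) = 1 := by
    rw [← hBB, Matrix.mul_inv_rev]
    simp only [← Matrix.mul_assoc]
    rw [Matrix.mul_nonsing_inv _ hBu, Matrix.one_mul, Matrix.nonsing_inv_mul _ hBu]
  have hq : ∀ u : Fin d → ℝ, (B *ᵥ u) ⬝ᵥ (S⁻¹ *ᵥ (B *ᵥ u)) = u ⬝ᵥ u := by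
    intro u
    have hBv : B *ᵥ u = u ᵥ* B := by rw [← hBsym, Matrix.mulVec_transpose, hBsym]
    rw [Matrix.mulVec_mulVec, hBv, ← Matrix.dotProduct_mulVec, Matrix.mulVec_mulVec, hquad,
      Matrix.one_mulVec]
  have hqc : Continuous fun x : Fin d → ℝ => x ⬝ᵥ (S⁻¹ *ᵥ x) := by
    apply Continuous.dotProduct continuous_id
    exact Continuous.matrix_mulVec (by continuity) continuous_id
  have h1 : ∫ x : Fin d → ℝ, f (x ⬝ᵥ (S⁻¹ *ᵥ x)) =
      |B.det| * ∫ u, f ((B *ᵥ u) ⬝ᵥ (S⁻¹ *ᵥ (B *ᵥ u))) :=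
    matrixCoV d _ (hf.comp hqc).measurable B hBpos.ne'
  have h2 : ∫ u : Fin d → ℝ, f ((B *ᵥ u) ⬝ᵥ (S⁻¹ *ᵥ (B *ᵥ u))) =
      ∫ u : Fin d → ℝ, f (u ⬝ᵥ u) := by
    congr 1 with u; rw [hq u]
  have h3 : ∫ u : Fin d → ℝ, f (u ⬝ᵥ u) = ∫ y : EuclideanSpace ℝ (Fin d), f (‖y‖^2) := by
    rw [← (EuclideanSpace.volume_preserving_symm_measurableEquiv_toLp (Fin d)).integral_comp
      (MeasurableEquiv.toLp 2 (Fin d → ℝ)).symm.measurableEmbedding (fun u => f (u ⬝ᵥ u))]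
    congr 1 with y
    congr 1
    rw [← real_inner_self_eq_norm_sq]
    simp [dotProduct, PiLp.inner_apply, RCLike.inner_apply]
    rw [EuclideanSpace.norm_sq_eq]
    simp [sq]
  rw [h0, h1, h2, h3, abs_of_pos hBpos, hdet, radialE d hd (fun r => f (r^2))]

private lemma radial1 (d : ℕ) (hd : 0 < d) (c β R : ℝ) (hβ : β = (4 + (d:ℝ))⁻¹)
    (hR : R = Real.sqrt (4 + d)) :
    ∫ r in Set.Ioi (0:ℝ), r^(d-1) * (c * max (1 - β * r^2) 0) = c * (2 * R^d) / (d*(d+2)) := by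
  have hd4 : (0:ℝ) < 4 + d := by positivity
  have hR2 : R^2 = 4 + d := by rw [hR]; exact Real.sq_sqrt hd4.le
  have hR0 : 0 ≤ R := by rw [hR]; positivity
  have hmax : ∀ r ∈ Set.Icc (0:ℝ) R, r^(d-1) * (c * max (1 - β * r^2) 0)
      = c * r^(d-1) - c * β * r^(d+1) := by
    intro r hr
    have h1 : r^2 ≤ 4 + d := by rw [← hR2]; exact pow_le_pow_left₀ hr.1 hr.2 2
    have : 0 ≤ 1 - β * r^2 := by
      have h2 : (4+(d:ℝ))⁻¹ * r^2 ≤ (4+(d:ℝ))⁻¹ * (4+d) := by gcongr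
      rw [inv_mul_cancel₀ hd4.ne'] at h2
      rw [hβ]; linarith
    rw [max_eq_left this]
    have : r^(d+1) = r^(d-1) * r^2 := by
      rw [← pow_add]; congr 1; omega
    rw [this]; ring
  rw [setIntegral_eq_of_subset_of_ae_diff_eq_zero measurableSet_Ioi.nullMeasurableSet
    (Set.Ioc_subset_Ioi_self) ?_]
  · rw [← intervalIntegral.integral_of_le hR0,
      intervalIntegral.integral_congr (g := fun r => c * r^(d-1) - c * β * r^(d+1)) ?_]
    · rw [intervalIntegral.integral_sub, intervalIntegral.integral_const_mul,
        intervalIntegral.integral_const_mul, integral_pow, integral_pow]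
      · have h1 : d - 1 + 1 = d := by omega
        rw [h1]
        have h2 : R^(d+1+1) = R^d * R^2 := by rw [← pow_add]
        rw [h2, hR2, hβ]
        simp only [ne_eq, add_eq_zero, one_ne_zero, and_false, not_false_eq_true, zero_pow,
          sub_zero, Nat.cast_sub (by omega : 1 ≤ d), Nat.cast_one, (by omega : d ≠ 0)]
        push_cast
        simp only [zero_pow (by omega : d ≠ 0), sub_zero, sub_add_cancel, mul_zero]
        have hdd : (0:ℝ) < d := by exact_mod_cast hd
        field_simp
        ring
      · exact (intervalIntegral.intervalIntegrable_pow _).const_mul c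
      · exact (intervalIntegral.intervalIntegrable_pow _).const_mul (c*β)
    · intro r hr
      rw [Set.uIcc_of_le hR0] at hr
      exact hmax r hr
  · filter_upwards [] with r hr
    have hr0 : (0:ℝ) < r := hr.1
    have hrR : R ≤ r := le_of_not_gt fun h => hr.2 ⟨hr0, h.le⟩
    have : 1 - β * r^2 ≤ 0 := by
      have h2 : (4+(d:ℝ))⁻¹ * (4+d) ≤ (4+(d:ℝ))⁻¹ * r^2 :=
        mul_le_mul_of_nonneg_left (by rw [← hR2]; exact pow_le_pow_left₀ hR0 hrR 2)
          (by positivity)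
      rw [inv_mul_cancel₀ hd4.ne'] at h2
      rw [hβ]; linarith
    rw [max_eq_right this, mul_zero, mul_zero]

private lemma radial2 (d : ℕ) (hd : 0 < d) (c β R : ℝ) (hβ : β = (4 + (d:ℝ))⁻¹)
    (hR : R = Real.sqrt (4 + d)) :
    ∫ r in Set.Ioi (0:ℝ), r^(d-1) * (c * max (1 - β * r^2) 0)^2
      = c^2 * (8 * R^d) / (d*(d+2)*(d+4)) := by
  have hd4 : (0:ℝ) < 4 + d := by positivity
  have hR2 : R^2 = 4 + d := by rw [hR]; exact Real.sq_sqrt hd4.le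
  have hR0 : 0 ≤ R := by rw [hR]; positivity
  have hmax : ∀ r ∈ Set.Icc (0:ℝ) R, r^(d-1) * (c * max (1 - β * r^2) 0)^2
      = c^2 * r^(d-1) - 2*c^2*β * r^(d+1) + c^2*β^2 * r^(d+3) := by
    intro r hr
    have h1 : r^2 ≤ 4 + d := by rw [← hR2]; exact pow_le_pow_left₀ hr.1 hr.2 2
    have : 0 ≤ 1 - β * r^2 := by
      have h2 : (4+(d:ℝ))⁻¹ * r^2 ≤ (4+(d:ℝ))⁻¹ * (4+d) := by gcongr
      rw [inv_mul_cancel₀ hd4.ne'] at h2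
      rw [hβ]; linarith
    rw [max_eq_left this]
    have e1 : r^(d+1) = r^(d-1) * r^2 := by rw [← pow_add]; congr 1; omega
    have e2 : r^(d+3) = r^(d-1) * r^2 * r^2 := by
      rw [mul_assoc, ← pow_add, ← pow_add]; congr 1; omega
    rw [e1, e2]; ring
  rw [setIntegral_eq_of_subset_of_ae_diff_eq_zero measurableSet_Ioi.nullMeasurableSet
    (Set.Ioc_subset_Ioi_self) ?_]
  · rw [← intervalIntegral.integral_of_le hR0,
      intervalIntegral.integral_congr
        (g := fun r => c^2 * r^(d-1) - 2*c^2*β * r^(d+1) + c^2*β^2 * r^(d+3)) ?_]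
    · rw [intervalIntegral.integral_add, intervalIntegral.integral_sub,
        intervalIntegral.integral_const_mul, intervalIntegral.integral_const_mul,
        intervalIntegral.integral_const_mul, integral_pow, integral_pow, integral_pow]
      · have h1 : d - 1 + 1 = d := by omega
        rw [h1]
        have h2 : R^(d+1+1) = R^d * R^2 := by rw [← pow_add]
        have h3 : R^(d+3+1) = R^d * R^2 * R^2 := by rw [mul_assoc, ← pow_add, ← pow_add]
        rw [h2, h3, hR2, hβ]
        simp only [ne_eq, add_eq_zero, one_ne_zero, and_false, not_false_eq_true, zero_pow,
          sub_zero, Nat.cast_sub (by omega : 1 ≤ d), Nat.cast_one, (by omega : d ≠ 0)]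
        push_cast
        simp only [zero_pow (by omega : d ≠ 0), sub_zero, sub_add_cancel, mul_zero]
        have hdd : (0:ℝ) < d := by exact_mod_cast hd
        field_simp
        ring
      · exact (intervalIntegral.intervalIntegrable_pow _).const_mul _
      · exact (intervalIntegral.intervalIntegrable_pow _).const_mul _
      · exact ((intervalIntegral.intervalIntegrable_pow _).const_mul _).sub
          ((intervalIntegral.intervalIntegrable_pow _).const_mul _)
      · exact (intervalIntegral.intervalIntegrable_pow _).const_mul _
    · intro r hr
      rw [Set.uIcc_of_le hR0] at hr
      exact hmax r hr
  · filter_upwards [] with r hr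
    have hr0 : (0:ℝ) < r := hr.1
    have hrR : R ≤ r := le_of_not_gt fun h => hr.2 ⟨hr0, h.le⟩
    have : 1 - β * r^2 ≤ 0 := by
      have h2 : (4+(d:ℝ))⁻¹ * (4+d) ≤ (4+(d:ℝ))⁻¹ * r^2 :=
        mul_le_mul_of_nonneg_left (by rw [← hR2]; exact pow_le_pow_left₀ hR0 hrR 2)
          (by positivity)
      rw [inv_mul_cancel₀ hd4.ne'] at h2
      rw [hβ]; linarith
    rw [max_eq_right this, mul_zero, zero_pow (by norm_num), mul_zero]

private lemma alg1 (P G D a r dR A : ℝ) (hP : P>0) (hG : G>0) (hD : D>0) (hd : dR>0)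
    (har : a*r=1) (hA : A = (1+dR/2)*G*a/(P*D)) :
    D * (dR * (P/G) * (A * (2*r)/(dR*(dR+2)))) = 1 := by
  subst hA
  field_simp
  linear_combination (2 + dR) * har

private lemma alg2 (P G D a r dR A : ℝ) (hP : P>0) (hG : G>0) (hD : D>0) (hd : dR>0)
    (har : a*r=1) (hA : A = (1+dR/2)*G*a/(P*D)) :
    D * (dR * (P/G) * (A^2 * (8*r)/(dR*(dR+2)*(dR+4)))) =
    2*((1+dR/2)*G)^2*a/(((2+dR/2)*((1+dR/2)*G))*P*D) := by
  subst hA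
  field_simp
  linear_combination
    (a*(64 + 48*dR + 8*dR^2)) * har

/-- The Pearson type II (Student-r) function
`p*(x) = A(1 − β(x−μ)ᵀΣ⁻¹(x−μ))` on `Ω₀ = {x : (x−μ)ᵀΣ⁻¹(x−μ) ≤ 4+d}`,
with `β = 1/(4+d)` and `A = Γ(2+d/2)β^{d/2}/(π^{d/2}|Σ|^{1/2})`, is a probability
density whose quadratic Rényi entropy equals
`−log(2Γ(2+d/2)²β^{d/2}/(Γ(3+d/2)π^{d/2}|Σ|^{1/2}))`. -/
theorem stmt_14 (d : ℕ) (hd : 0 < d) (μv : Fin d → ℝ)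
    (S : Matrix (Fin d) (Fin d) ℝ) (hS : S.PosDef)
    (β A : ℝ) (hβ : β = (4 + (d : ℝ))⁻¹)
    (hA : A = Real.Gamma (2 + (d : ℝ) / 2) * β ^ ((d : ℝ) / 2) /
      (π ^ ((d : ℝ) / 2) * Real.sqrt S.det))
    (pstar : (Fin d → ℝ) → ℝ)
    (hpstar : pstar = fun x =>
      if (x - μv) ⬝ᵥ (S⁻¹ *ᵥ (x - μv)) ≤ 4 + (d : ℝ) then
        A * (1 - β * ((x - μv) ⬝ᵥ (S⁻¹ *ᵥ (x - μv))))
      else 0) :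
    (∀ x, 0 ≤ pstar x) ∧ (∫ x, pstar x) = 1 ∧
    -Real.log (∫ x, pstar x ^ 2) =
      -Real.log (2 * Real.Gamma (2 + (d : ℝ) / 2) ^ 2 * β ^ ((d : ℝ) / 2) /
        (Real.Gamma (3 + (d : ℝ) / 2) * π ^ ((d : ℝ) / 2) * Real.sqrt S.det)) := by
  have hd4 : (0:ℝ) < 4 + d := by positivity
  have hβ0 : 0 < β := by rw [hβ]; positivity
  have hΓ2 : 0 < Real.Gamma (2 + (d:ℝ)/2) := Real.Gamma_pos_of_pos (by positivity)
  have hΓG : 0 < Real.Gamma ((d:ℝ)/2 + 1) := Real.Gamma_pos_of_pos (by positivity)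
  have hDpos : 0 < Real.sqrt S.det := Real.sqrt_pos.2 hS.det_pos
  have hPpos : 0 < π ^ ((d:ℝ)/2) := Real.rpow_pos_of_pos Real.pi_pos _
  have hapos : 0 < β ^ ((d:ℝ)/2) := Real.rpow_pos_of_pos hβ0 _
  have hA0 : 0 ≤ A := by
    rw [hA]
    exact div_nonneg (mul_nonneg hΓ2.le hapos.le) (by positivity)
  set R : ℝ := Real.sqrt (4 + d) with hR
  have hRd : R ^ d = (4 + (d:ℝ)) ^ ((d:ℝ)/2) := by
    rw [hR, Real.sqrt_eq_rpow, ← Real.rpow_natCast ((4+(d:ℝ)) ^ ((1:ℝ)/2)) d,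
      ← Real.rpow_mul hd4.le]
    congr 1; ring
  have har : β ^ ((d:ℝ)/2) * R ^ d = 1 := by
    rw [hRd, hβ, Real.inv_rpow hd4.le, inv_mul_cancel₀ (Real.rpow_pos_of_pos hd4 _).ne']
  have hPd : Real.sqrt π ^ d = π ^ ((d:ℝ)/2) := by
    rw [Real.sqrt_eq_rpow, ← Real.rpow_natCast (π ^ ((1:ℝ)/2)) d, ← Real.rpow_mul Real.pi_pos.le]
    congr 1; ring
  have hG2 : Real.Gamma (2 + (d:ℝ)/2) = (1 + (d:ℝ)/2) * Real.Gamma ((d:ℝ)/2 + 1) := by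
    have h := Real.Gamma_add_one (show (1 + (d:ℝ)/2) ≠ 0 by positivity)
    rw [show (2 + (d:ℝ)/2) = 1 + (d:ℝ)/2 + 1 by ring, h,
      show (1 : ℝ) + (d:ℝ)/2 = (d:ℝ)/2 + 1 by ring]
  have hG3 : Real.Gamma (3 + (d:ℝ)/2) = (2 + (d:ℝ)/2) * Real.Gamma (2 + (d:ℝ)/2) := by
    have h := Real.Gamma_add_one (show (2 + (d:ℝ)/2) ≠ 0 by positivity)
    rw [show (3 + (d:ℝ)/2) = 2 + (d:ℝ)/2 + 1 by ring, h]
  have hdd : (0:ℝ) < d := by exact_mod_cast hd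
  -- rewrite pstar in max form
  have hps' : pstar = fun x =>
      A * max (1 - β * ((x - μv) ⬝ᵥ (S⁻¹ *ᵥ (x - μv)))) 0 := by
    funext x
    rw [hpstar]
    dsimp only
    set q := (x - μv) ⬝ᵥ (S⁻¹ *ᵥ (x - μv)) with hq
    split_ifs with h
    · rw [max_eq_left]
      have h2 : β * q ≤ β * (4 + d) := mul_le_mul_of_nonneg_left h hβ0.le
      rw [hβ, inv_mul_cancel₀ hd4.ne'] at h2
      rw [hβ]; linarith
    · push_neg at h
      rw [max_eq_right, mul_zero]
      have h2 : β * (4 + (d:ℝ)) ≤ β * q := mul_le_mul_of_nonneg_left h.le hβ0.le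
      rw [hβ, inv_mul_cancel₀ hd4.ne'] at h2
      rw [hβ]; linarith
  refine ⟨fun x => by rw [hps']; exact mul_nonneg hA0 (le_max_right _ _), ?_, ?_⟩
  · -- normalization
    have hf : Continuous fun t : ℝ => A * max (1 - β * t) 0 :=
      continuous_const.mul ((continuous_const.sub (continuous_const.mul continuous_id)).max
        continuous_const)
    have h1 : ∫ x, pstar x = Real.sqrt S.det * ((d : ℝ) *
        (Real.sqrt π ^ d / Real.Gamma ((d:ℝ)/2+1)) *
        ∫ r in Set.Ioi (0:ℝ), r^(d-1) * (A * max (1 - β * r^2) 0)) := by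
      rw [hps']
      exact keyCoV d hd μv S hS (fun t => A * max (1 - β * t) 0) hf
    rw [h1, radial1 d hd A β R hβ hR, hPd]
    exact alg1 _ _ _ _ _ _ _ hPpos hΓG hDpos hdd har (by rw [hA, hG2]; try ring)
  · -- entropy
    have hf : Continuous fun t : ℝ => (A * max (1 - β * t) 0)^2 :=
      (continuous_const.mul ((continuous_const.sub (continuous_const.mul continuous_id)).max
        continuous_const)).pow 2
    have h1 : ∫ x, pstar x ^ 2 = Real.sqrt S.det * ((d : ℝ) *
        (Real.sqrt π ^ d / Real.Gamma ((d:ℝ)/2+1)) *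
        ∫ r in Set.Ioi (0:ℝ), r^(d-1) * (A * max (1 - β * r^2) 0)^2) := by
      have : (fun x => pstar x ^ 2) = fun x =>
          (A * max (1 - β * ((x - μv) ⬝ᵥ (S⁻¹ *ᵥ (x - μv)))) 0)^2 := by rw [hps']
      rw [show ∫ x, pstar x ^ 2 = ∫ x, (A * max (1 - β * ((x - μv) ⬝ᵥ (S⁻¹ *ᵥ (x - μv)))) 0)^2
        from by rw [← this]]
      exact keyCoV d hd μv S hS (fun t => (A * max (1 - β * t) 0)^2) hf
    have h2 : ∫ x, pstar x ^ 2 =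
        2 * Real.Gamma (2 + (d : ℝ) / 2) ^ 2 * β ^ ((d : ℝ) / 2) /
        (Real.Gamma (3 + (d : ℝ) / 2) * π ^ ((d : ℝ) / 2) * Real.sqrt S.det) := by
      rw [h1, radial2 d hd A β R hβ hR, hPd]
      rw [show 2 * Real.Gamma (2 + (d : ℝ) / 2) ^ 2 * β ^ ((d : ℝ) / 2) /
          (Real.Gamma (3 + (d : ℝ) / 2) * π ^ ((d : ℝ) / 2) * Real.sqrt S.det)
        = 2*((1+(d:ℝ)/2)*Real.Gamma ((d:ℝ)/2+1))^2 * β ^ ((d:ℝ)/2) /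
          (((2+(d:ℝ)/2)*((1+(d:ℝ)/2)*Real.Gamma ((d:ℝ)/2+1)))*π ^ ((d:ℝ)/2)*Real.sqrt S.det)
        from by rw [hG3, hG2]; try ring]
      exact alg2 _ _ _ _ _ _ _ hPpos hΓG hDpos hdd har (by rw [hA, hG2]; try ring)
    rw [h2]
end

section
/- Among all probability densities p on ℝ^d with support contained in Ω₀ = {x : (x−μ)^T Σ^{-1}(x−μ) ≤ 4+d}, mean μ, and covariance matrix Σ, the quadratic Rényi entropy h₂(p) = −log(∫ p²) is uniquely maximized by the Pearson type II density p*(x) = A(1 − β(x−μ)^T Σ^{-1}(x−μ)) on Ω₀ with β = 1/(4+d) and A = Γ(2+d/2)β^{d/2}/(π^{d/2}|Σ|^{1/2}); that is, h₂(p) ≤ h₂(p*) with equality iff p = p* Lebesgue-almost everywhere. -/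
open MeasureTheory Real Matrix

open Set

open scoped MatrixOrder

section PearsonAux
variable {d : ℕ}

variable {d : ℕ}

lemma Q_of_L {S L : Matrix (Fin d) (Fin d) ℝ} (hLL : L * L = S) (hLT : Lᵀ = L)
    (hdet : IsUnit L.det) (u : Fin d → ℝ) :
    (L *ᵥ u) ⬝ᵥ (S⁻¹ *ᵥ (L *ᵥ u)) = u ⬝ᵥ u := by
  have h1 : S⁻¹ *ᵥ (L *ᵥ u) = L⁻¹ *ᵥ u := by
    rw [← hLL, Matrix.mul_inv_rev, Matrix.mulVec_mulVec, Matrix.mul_assoc,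
      Matrix.nonsing_inv_mul _ hdet, Matrix.mul_one]
  rw [h1, dotProduct_comm, Matrix.dotProduct_mulVec, ← Matrix.mulVec_transpose,
    hLT, Matrix.mulVec_mulVec, Matrix.mul_nonsing_inv _ hdet, Matrix.one_mulVec]

section LinAlg
variable {S : Matrix (Fin d) (Fin d) ℝ}

lemma sqrtS_transpose (hS : S.PosDef) : (CFC.sqrt S)ᵀ = CFC.sqrt S := by
  have h := (CFC.sqrt_nonneg S).posSemidef.isHermitian
  simpa [Matrix.IsHermitian, Matrix.conjTranspose_eq_transpose_of_trivial] using h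

lemma sqrtS_det_nonneg (hS : S.PosDef) : 0 ≤ (CFC.sqrt S).det := by
  have h := (CFC.sqrt_nonneg S).posSemidef
  rw [h.isHermitian.det_eq_prod_eigenvalues]
  exact Finset.prod_nonneg fun i _ => by simpa using h.eigenvalues_nonneg i

lemma sqrtS_det_eq (hS : S.PosDef) : (CFC.sqrt S).det = Real.sqrt S.det := by
  have h2 : (CFC.sqrt S).det * (CFC.sqrt S).det = S.det := by
    rw [← Matrix.det_mul, CFC.sqrt_mul_sqrt_self S hS.posSemidef.nonneg]
  rw [← h2, Real.sqrt_mul_self (sqrtS_det_nonneg hS)]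

lemma sqrtS_det_pos (hS : S.PosDef) : 0 < (CFC.sqrt S).det := by
  rw [sqrtS_det_eq hS]; exact Real.sqrt_pos.2 hS.det_pos
end LinAlg

lemma cont_quad (M : Matrix (Fin d) (Fin d) ℝ) : Continuous fun y : Fin d → ℝ => y ⬝ᵥ (M *ᵥ y) := by
  simp only [dotProduct, Matrix.mulVec]
  fun_prop

lemma integral_Q (hd : 0 < d) (μv : Fin d → ℝ) {S : Matrix (Fin d) (Fin d) ℝ} (hS : S.PosDef)
    (f : ℝ → ℝ) (hf : Measurable f) :
    ∫ x : Fin d → ℝ, f ((x - μv) ⬝ᵥ (S⁻¹ *ᵥ (x - μv))) =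
      Real.sqrt S.det * ((d : ℝ) *
        ((volume (Metric.ball (0 : EuclideanSpace ℝ (Fin d)) 1)).toReal *
        ∫ y in Ioi (0:ℝ), y ^ (d - 1) * f (y ^ 2))) := by
  have hne : Nonempty (Fin d) := Fin.pos_iff_nonempty.mp hd
  set L := CFC.sqrt S with hLdef
  have hLL : L * L = S := CFC.sqrt_mul_sqrt_self S hS.posSemidef.nonneg
  have hLT : Lᵀ = L := sqrtS_transpose hS
  have hdetpos : 0 < L.det := sqrtS_det_pos hS
  have hdet : IsUnit L.det := hdetpos.ne'.isUnit
  have hFm : Measurable fun y : Fin d → ℝ => f (y ⬝ᵥ (S⁻¹ *ᵥ y)) :=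
    hf.comp (cont_quad _).measurable
  -- step 1 : translation
  have step1 : ∫ x : Fin d → ℝ, f ((x - μv) ⬝ᵥ (S⁻¹ *ᵥ (x - μv)))
      = ∫ y : Fin d → ℝ, f (y ⬝ᵥ (S⁻¹ *ᵥ y)) :=
    integral_sub_right_eq_self (fun y => f (y ⬝ᵥ (S⁻¹ *ᵥ y))) μv
  -- step 2 : linear change of variables
  have hmap : Measure.map (Matrix.toLin' L) volume
      = ENNReal.ofReal |L.det|⁻¹ • volume := by
    have := Real.map_matrix_volume_pi_eq_smul_volume_pi (M := L) hdetpos.ne'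
    rwa [abs_inv] at this
  have hvol : (volume : Measure (Fin d → ℝ))
      = ENNReal.ofReal |L.det| • Measure.map (Matrix.toLin' L) volume := by
    rw [hmap, smul_smul, ← ENNReal.ofReal_mul (abs_nonneg _),
      mul_inv_cancel₀ (abs_ne_zero.mpr hdetpos.ne'), ENNReal.ofReal_one, one_smul]
  have step2 : ∫ y : Fin d → ℝ, f (y ⬝ᵥ (S⁻¹ *ᵥ y))
      = L.det * ∫ u : Fin d → ℝ, f (u ⬝ᵥ u) := by
    calc ∫ y : Fin d → ℝ, f (y ⬝ᵥ (S⁻¹ *ᵥ y))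
        = ∫ y, f (y ⬝ᵥ (S⁻¹ *ᵥ y)) ∂(ENNReal.ofReal |L.det| •
            Measure.map (Matrix.toLin' L) volume) := by rw [← hvol]
      _ = |L.det| * ∫ y, f (y ⬝ᵥ (S⁻¹ *ᵥ y)) ∂(Measure.map (Matrix.toLin' L) volume) := by
            rw [integral_smul_measure, ENNReal.toReal_ofReal (abs_nonneg _), smul_eq_mul]
      _ = |L.det| * ∫ u, f ((Matrix.toLin' L u) ⬝ᵥ (S⁻¹ *ᵥ (Matrix.toLin' L u))) := by
            rw [integral_map (Matrix.toLin' L).continuous_of_finiteDimensional.measurable.aemeasurable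
              hFm.aestronglyMeasurable]
      _ = L.det * ∫ u : Fin d → ℝ, f (u ⬝ᵥ u) := by
            rw [abs_of_pos hdetpos]
            congr 1
            refine integral_congr_ae (Filter.Eventually.of_forall fun u => ?_)
            show f ((Matrix.toLin' L u) ⬝ᵥ (S⁻¹ *ᵥ (Matrix.toLin' L u))) = f (u ⬝ᵥ u)
            rw [Matrix.toLin'_apply, Q_of_L hLL hLT hdet]
  -- step 3 : move to EuclideanSpace
  have step3 : ∫ u : Fin d → ℝ, f (u ⬝ᵥ u)
      = ∫ v : EuclideanSpace ℝ (Fin d), f (‖v‖ ^ 2) := by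
    rw [← (EuclideanSpace.volume_preserving_symm_measurableEquiv_toLp (Fin d)).integral_comp
      (MeasurableEquiv.toLp 2 (Fin d → ℝ)).symm.measurableEmbedding
      (fun u : Fin d → ℝ => f (u ⬝ᵥ u))]
    refine integral_congr_ae (Filter.Eventually.of_forall fun v => ?_)
    show f ((MeasurableEquiv.toLp 2 (Fin d → ℝ)).symm v ⬝ᵥ (MeasurableEquiv.toLp 2 (Fin d → ℝ)).symm v)
        = f (‖v‖ ^ 2)
    congr 1
    have h1 : (MeasurableEquiv.toLp 2 (Fin d → ℝ)).symm v ⬝ᵥ (MeasurableEquiv.toLp 2 (Fin d → ℝ)).symm v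
        = ∑ i, v i * v i := rfl
    rw [h1, EuclideanSpace.norm_eq, Real.sq_sqrt (by positivity)]
    simp [sq]
  -- step 4 : radial integration
  have step4 : ∫ v : EuclideanSpace ℝ (Fin d), f (‖v‖ ^ 2)
      = (d : ℝ) * ((volume (Metric.ball (0 : EuclideanSpace ℝ (Fin d)) 1)).toReal *
        ∫ y in Ioi (0:ℝ), y ^ (d - 1) * f (y ^ 2)) := by
    have := integral_fun_norm_addHaar (volume : Measure (EuclideanSpace ℝ (Fin d)))
      (fun r => f (r ^ 2))
    simp only [finrank_euclideanSpace_fin, nsmul_eq_mul, smul_eq_mul] at this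
    rw [this, measureReal_def]
  rw [step1, step2, step3, step4, sqrtS_det_eq hS]

lemma integrable_Q (μv : Fin d → ℝ) {S : Matrix (Fin d) (Fin d) ℝ} (hS : S.PosDef)
    (f : ℝ → ℝ) (hf : Measurable f) {C R : ℝ}
    (hb : ∀ t ∈ Icc (0:ℝ) R, |f t| ≤ C) (h0 : ∀ t, R < t → f t = 0) :
    Integrable fun x : Fin d → ℝ => f ((x - μv) ⬝ᵥ (S⁻¹ *ᵥ (x - μv))) := by
  set L := CFC.sqrt S with hLdef
  have hLL : L * L = S := CFC.sqrt_mul_sqrt_self S hS.posSemidef.nonneg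
  have hLT : Lᵀ = L := sqrtS_transpose hS
  have hdet : IsUnit L.det := (sqrtS_det_pos hS).ne'.isUnit
  have hQc : Continuous fun x : Fin d → ℝ => (x - μv) ⬝ᵥ (S⁻¹ *ᵥ (x - μv)) :=
    (cont_quad S⁻¹).comp (continuous_id.sub continuous_const)
  have hQ0 : ∀ x : Fin d → ℝ, 0 ≤ (x - μv) ⬝ᵥ (S⁻¹ *ᵥ (x - μv)) := by
    intro x
    have := hS.inv.posSemidef.dotProduct_mulVec_nonneg (x - μv)
    simpa using this
  set K : Set (Fin d → ℝ) := {x | (x - μv) ⬝ᵥ (S⁻¹ *ᵥ (x - μv)) ≤ R} with hKdef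
  have hKc : IsClosed K := isClosed_le hQc continuous_const
  -- K is the image of a compact set under a continuous map
  have hTc : Continuous fun u : Fin d → ℝ => L *ᵥ u + μv := by
    have h1 : Continuous fun u : Fin d → ℝ => Matrix.toLin' L u :=
      (Matrix.toLin' L).continuous_of_finiteDimensional
    exact (by simpa [Matrix.toLin'_apply] using h1 : Continuous fun u : Fin d → ℝ => L *ᵥ u).add continuous_const
  have hBcpt : IsCompact {u : Fin d → ℝ | u ⬝ᵥ u ≤ R} := by
    have hcl : IsClosed {u : Fin d → ℝ | u ⬝ᵥ u ≤ R} := by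
      have : Continuous fun u : Fin d → ℝ => u ⬝ᵥ u := by
        simp only [dotProduct]; fun_prop
      exact isClosed_le this continuous_const
    have hbd : Bornology.IsBounded {u : Fin d → ℝ | u ⬝ᵥ u ≤ R} := by
      refine Metric.isBounded_iff_subset_closedBall 0 |>.2 ⟨Real.sqrt R, fun u hu => ?_⟩
      simp only [Set.mem_setOf_eq] at hu
      rw [Metric.mem_closedBall, dist_zero_right]
      refine (pi_norm_le_iff_of_nonneg (Real.sqrt_nonneg R)).2 fun i => ?_
      have h1 : u i ^ 2 ≤ u ⬝ᵥ u := by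
        rw [dotProduct]
        have : u i ^ 2 = u i * u i := sq (u i) ▸ rfl
        rw [this]
        exact Finset.single_le_sum (f := fun j => u j * u j)
          (fun j _ => mul_self_nonneg (u j)) (Finset.mem_univ i)
      exact Real.abs_le_sqrt (h1.trans hu)
    exact Metric.isCompact_of_isClosed_isBounded hcl hbd
  have hKB : K = (fun u : Fin d → ℝ => L *ᵥ u + μv) '' {u : Fin d → ℝ | u ⬝ᵥ u ≤ R} := by
    ext x
    constructor
    · intro hx
      refine ⟨L⁻¹ *ᵥ (x - μv), ?_, ?_⟩
      · have h2 : L *ᵥ (L⁻¹ *ᵥ (x - μv)) = x - μv := by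
          rw [Matrix.mulVec_mulVec, Matrix.mul_nonsing_inv _ hdet, Matrix.one_mulVec]
        have h3 := Q_of_L hLL hLT hdet (L⁻¹ *ᵥ (x - μv))
        rw [h2] at h3
        have hx' : (x - μv) ⬝ᵥ (S⁻¹ *ᵥ (x - μv)) ≤ R := hx
        show (L⁻¹ *ᵥ (x - μv)) ⬝ᵥ (L⁻¹ *ᵥ (x - μv)) ≤ R
        rw [← h3]; exact hx'
      · show L *ᵥ (L⁻¹ *ᵥ (x - μv)) + μv = x
        rw [Matrix.mulVec_mulVec, Matrix.mul_nonsing_inv _ hdet, Matrix.one_mulVec,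
          sub_add_cancel]
    · rintro ⟨u, hu, rfl⟩
      have h3 := Q_of_L hLL hLT hdet u
      show ((L *ᵥ u + μv) - μv) ⬝ᵥ (S⁻¹ *ᵥ ((L *ᵥ u + μv) - μv)) ≤ R
      rw [add_sub_cancel_right, h3]; exact hu
  have hKcpt : IsCompact K := hKB ▸ hBcpt.image hTc
  have heq : (fun x : Fin d → ℝ => f ((x - μv) ⬝ᵥ (S⁻¹ *ᵥ (x - μv))))
      = K.indicator fun x => f ((x - μv) ⬝ᵥ (S⁻¹ *ᵥ (x - μv))) := by
    funext x
    by_cases hx : x ∈ K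
    · rw [Set.indicator_of_mem hx]
    · rw [Set.indicator_of_notMem hx, h0 _ (lt_of_not_ge hx)]
  rw [heq, integrable_indicator_iff hKc.measurableSet]
  refine Measure.integrableOn_of_bounded (M := C) hKcpt.measure_lt_top.ne
    (hf.comp hQc.measurable).aestronglyMeasurable ?_
  refine (ae_restrict_iff' hKc.measurableSet).2 (Filter.Eventually.of_forall fun x hx => ?_)
  exact hb _ ⟨hQ0 x, hx⟩

lemma oneD (hd : 0 < d) {R : ℝ} (hR : 0 < R) (g : ℝ → ℝ) (hg : Continuous g) :
    ∫ y in Ioi (0:ℝ), y ^ (d-1) * (if y^2 ≤ R then g (y^2) else 0)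
      = ∫ y in (0:ℝ)..(Real.sqrt R), y ^ (d-1) * g (y^2) := by
  set a := Real.sqrt R with ha
  have ha0 : 0 ≤ a := Real.sqrt_nonneg R
  have haa : a ^ 2 = R := Real.sq_sqrt hR.le
  have hsplit : Ioi (0:ℝ) = Ioc 0 a ∪ Ioi a := (Set.Ioc_union_Ioi_eq_Ioi ha0).symm
  have hpoly : Continuous fun y : ℝ => y ^ (d-1) * g (y^2) := by fun_prop
  have hEq1 : Set.EqOn (fun y : ℝ => y ^ (d-1) * g (y^2))
      (fun y : ℝ => y ^ (d-1) * (if y^2 ≤ R then g (y^2) else 0)) (Ioc 0 a) := by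
    intro y hy
    have : y^2 ≤ R := by
      rw [← haa]; exact pow_le_pow_left₀ (le_of_lt hy.1) hy.2 2
    simp [this]
  have hEq2 : Set.EqOn (fun y : ℝ => y ^ (d-1) * (if y^2 ≤ R then g (y^2) else 0))
      (fun _ : ℝ => (0:ℝ)) (Ioi a) := by
    intro y hy
    have h1 : R < y^2 := by
      rw [← haa]
      exact pow_lt_pow_left₀ hy ha0 two_ne_zero
    simp [not_le.2 h1]
  have hint1 : IntegrableOn (fun y : ℝ => y ^ (d-1) * (if y^2 ≤ R then g (y^2) else 0))
      (Ioc 0 a) :=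
    (hpoly.integrableOn_Ioc).congr_fun hEq1 measurableSet_Ioc
  have hint2 : IntegrableOn (fun y : ℝ => y ^ (d-1) * (if y^2 ≤ R then g (y^2) else 0))
      (Ioi a) :=
    (integrableOn_zero).congr_fun (fun y hy => (hEq2 hy).symm) measurableSet_Ioi
  rw [hsplit, setIntegral_union (Set.Ioc_disjoint_Ioi le_rfl) measurableSet_Ioi hint1 hint2,
    setIntegral_congr_fun measurableSet_Ioi hEq2, integral_zero, add_zero,
    setIntegral_congr_fun measurableSet_Ioc hEq1.symm,
    ← intervalIntegral.integral_of_le ha0]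

lemma poly0 (hd : 0 < d) (a c β : ℝ) :
    ∫ y in (0:ℝ)..a, y^(d-1) * (c*(1 - β*y^2))
      = c*(a^d/d) - c*β*(a^(d+2)/(d+2)) := by
  have e1 : d - 1 + 1 = d := by omega
  have e2 : d - 1 + 2 = d + 1 := by omega
  have key : ∀ y : ℝ, y^(d-1) * (c*(1 - β*y^2)) = c*y^(d-1) - (c*β)*y^(d+1) := by
    intro y
    rw [← e2, pow_add]; ring
  rw [intervalIntegral.integral_congr (g := fun y => c*y^(d-1) - (c*β)*y^(d+1))
    (fun y _ => key y)]
  rw [intervalIntegral.integral_sub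
      (((intervalIntegral.intervalIntegrable_pow _)).const_mul _)
      (((intervalIntegral.intervalIntegrable_pow _)).const_mul _),
    intervalIntegral.integral_const_mul, intervalIntegral.integral_const_mul,
    integral_pow, integral_pow, e1]
  have c1 : ((d - 1 : ℕ) : ℝ) + 1 = (d:ℝ) := by exact_mod_cast congrArg (Nat.cast (R := ℝ)) e1
  have c2 : ((d + 1 : ℕ) : ℝ) + 1 = (d:ℝ) + 2 := by push_cast; ring
  rw [c1, c2, zero_pow (by omega : d ≠ 0), zero_pow (by omega : d + 1 + 1 ≠ 0)]
  have : d + 1 + 1 = d + 2 := by omega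
  rw [this]
  ring

lemma poly1 (hd : 0 < d) (a c β : ℝ) :
    ∫ y in (0:ℝ)..a, y^(d-1) * (c*(1 - β*y^2)*y^2)
      = c*(a^(d+2)/(d+2)) - c*β*(a^(d+4)/(d+4)) := by
  have e2 : d - 1 + 2 = d + 1 := by omega
  have e4 : d - 1 + 4 = d + 3 := by omega
  have key : ∀ y : ℝ, y^(d-1) * (c*(1 - β*y^2)*y^2) = c*y^(d+1) - (c*β)*y^(d+3) := by
    intro y
    rw [← e2, ← e4, pow_add, pow_add]; ring
  rw [intervalIntegral.integral_congr (g := fun y => c*y^(d+1) - (c*β)*y^(d+3))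
    (fun y _ => key y)]
  rw [intervalIntegral.integral_sub
      (((intervalIntegral.intervalIntegrable_pow _)).const_mul _)
      (((intervalIntegral.intervalIntegrable_pow _)).const_mul _),
    intervalIntegral.integral_const_mul, intervalIntegral.integral_const_mul,
    integral_pow, integral_pow]
  have c1 : ((d + 1 : ℕ) : ℝ) + 1 = (d:ℝ) + 2 := by push_cast; ring
  have c2 : ((d + 3 : ℕ) : ℝ) + 1 = (d:ℝ) + 4 := by push_cast; ring
  rw [c1, c2, zero_pow (by omega : d + 1 + 1 ≠ 0), zero_pow (by omega : d + 3 + 1 ≠ 0)]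
  have h1 : d + 1 + 1 = d + 2 := by omega
  have h2 : d + 3 + 1 = d + 4 := by omega
  rw [h1, h2]
  ring

lemma pstar_moments (hd : 0 < d) (μv : Fin d → ℝ) {S : Matrix (Fin d) (Fin d) ℝ} (hS : S.PosDef)
    (β A : ℝ) (hβ : β = (4 + (d : ℝ))⁻¹)
    (hA : A = Real.Gamma (2 + (d : ℝ) / 2) * β ^ ((d : ℝ) / 2) /
      (π ^ ((d : ℝ) / 2) * Real.sqrt S.det)) :
    (∫ x : Fin d → ℝ, (if (x - μv) ⬝ᵥ (S⁻¹ *ᵥ (x - μv)) ≤ 4 + (d:ℝ) then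
        A * (1 - β * ((x - μv) ⬝ᵥ (S⁻¹ *ᵥ (x - μv)))) else 0)) = 1 ∧
    (∫ x : Fin d → ℝ, (if (x - μv) ⬝ᵥ (S⁻¹ *ᵥ (x - μv)) ≤ 4 + (d:ℝ) then
        A * (1 - β * ((x - μv) ⬝ᵥ (S⁻¹ *ᵥ (x - μv)))) *
          ((x - μv) ⬝ᵥ (S⁻¹ *ᵥ (x - μv))) else 0)) = (d:ℝ) := by
  have hne : Nonempty (Fin d) := Fin.pos_iff_nonempty.mp hd
  set R : ℝ := 4 + (d:ℝ) with hR
  have hR0 : 0 < R := by positivity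
  set a : ℝ := Real.sqrt R with ha
  have ha0 : 0 ≤ a := Real.sqrt_nonneg R
  -- ball volume
  have hGpos : 0 < Real.Gamma ((d:ℝ)/2 + 1) := Real.Gamma_pos_of_pos (by positivity)
  have hV : (volume (Metric.ball (0 : EuclideanSpace ℝ (Fin d)) 1)).toReal
      = Real.sqrt π ^ d / Real.Gamma ((d:ℝ)/2 + 1) := by
    rw [EuclideanSpace.volume_ball]
    simp only [Fintype.card_fin, ENNReal.ofReal_one, one_pow, one_mul]
    rw [ENNReal.toReal_ofReal (by positivity)]
  -- rpow facts
  have hsqpi : Real.sqrt π ^ d = π ^ ((d:ℝ)/2) := by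
    rw [Real.sqrt_eq_rpow, ← Real.rpow_natCast (π ^ ((1:ℝ)/2)) d, ← Real.rpow_mul pi_pos.le,
      show (1:ℝ)/2 * (d:ℕ) = (d:ℝ)/2 by push_cast; ring]
  have haD : a ^ d = R ^ ((d:ℝ)/2) := by
    rw [ha, Real.sqrt_eq_rpow, ← Real.rpow_natCast (R ^ ((1:ℝ)/2)) d, ← Real.rpow_mul hR0.le,
      show (1:ℝ)/2 * (d:ℕ) = (d:ℝ)/2 by push_cast; ring]
  have ha2 : a ^ 2 = R := Real.sq_sqrt hR0.le
  have haD2 : a ^ (d+2) = R ^ ((d:ℝ)/2) * R := by rw [pow_add, haD, ha2]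
  have haD4 : a ^ (d+4) = R ^ ((d:ℝ)/2) * R^2 := by
    rw [pow_add, haD, show (4:ℕ) = 2 + 2 by rfl, pow_add, ha2]; ring
  have hβR : β = R⁻¹ := hβ
  have hβr : β ^ ((d:ℝ)/2) = (R ^ ((d:ℝ)/2))⁻¹ := by
    rw [hβR, ← Real.inv_rpow hR0.le]
  have hGam : Real.Gamma (2 + (d:ℝ)/2) = ((d:ℝ)+2)/2 * Real.Gamma ((d:ℝ)/2 + 1) := by
    have h := Real.Gamma_add_one (s := (d:ℝ)/2 + 1) (by positivity)
    rw [show (d:ℝ)/2 + 1 + 1 = 2 + (d:ℝ)/2 by ring] at h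
    rw [h]; ring
  -- nonzero facts
  have hRp0 : (0:ℝ) < R ^ ((d:ℝ)/2) := Real.rpow_pos_of_pos hR0 _
  have hpip0 : (0:ℝ) < π ^ ((d:ℝ)/2) := Real.rpow_pos_of_pos pi_pos _
  have hs0 : (0:ℝ) < Real.sqrt S.det := Real.sqrt_pos.2 hS.det_pos
  have hd0 : (0:ℝ) < (d:ℝ) := by exact_mod_cast hd
  constructor
  · have hf : Measurable fun t : ℝ => if t ≤ R then A * (1 - β*t) else 0 := by
      refine Measurable.ite ?_ (by fun_prop) measurable_const
      exact measurableSet_Iic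
    have h1 := integral_Q hd μv hS (fun t : ℝ => if t ≤ R then A * (1 - β*t) else 0) hf
    have h2 := oneD hd hR0 (fun t : ℝ => A * (1 - β*t)) (by fun_prop)
    have h3 := poly0 hd a A β
    rw [h1, h2, h3, hV, hsqpi, haD2, haD, hA, hβr, hGam, hβR]
    field_simp
    ring
  · have hf : Measurable fun t : ℝ => if t ≤ R then A * (1 - β*t) * t else 0 := by
      refine Measurable.ite ?_ (by fun_prop) measurable_const
      exact measurableSet_Iic
    have h1 := integral_Q hd μv hS (fun t : ℝ => if t ≤ R then A * (1 - β*t) * t else 0) hf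
    have h2 := oneD hd hR0 (fun t : ℝ => A * (1 - β*t) * t) (by fun_prop)
    have h3 : ∫ y in (0:ℝ)..a, y ^ (d-1) * (A * (1 - β*y^2) * y^2)
        = A*(a^(d+2)/(d+2)) - A*β*(a^(d+4)/(d+4)) := poly1 hd a A β
    rw [h1, h2, h3, hV, hsqpi, haD2, haD4, hA, hβr, hGam, hβR]
    field_simp
    ring


end PearsonAux

/-- Maximum quadratic Rényi entropy property of the Pearson type II density: among
all densities `p` supported in `Ω₀ = {x : (x−μ)ᵀΣ⁻¹(x−μ) ≤ 4+d}` with mean `μ` and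
covariance `Σ`, `h₂(p) = −log ∫ p² ≤ h₂(p*)`, with equality iff `p = p*` a.e. -/
theorem stmt_15 (d : ℕ) (hd : 0 < d) (μv : Fin d → ℝ)
    (S : Matrix (Fin d) (Fin d) ℝ) (hS : S.PosDef)
    (β A : ℝ) (hβ : β = (4 + (d : ℝ))⁻¹)
    (hA : A = Real.Gamma (2 + (d : ℝ) / 2) * β ^ ((d : ℝ) / 2) /
      (π ^ ((d : ℝ) / 2) * Real.sqrt S.det))
    (pstar : (Fin d → ℝ) → ℝ)
    (hpstar : pstar = fun x =>
      if (x - μv) ⬝ᵥ (S⁻¹ *ᵥ (x - μv)) ≤ 4 + (d : ℝ) then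
        A * (1 - β * ((x - μv) ⬝ᵥ (S⁻¹ *ᵥ (x - μv))))
      else 0)
    (p : (Fin d → ℝ) → ℝ) (hpm : Measurable p) (hpn : ∀ x, 0 ≤ p x)
    (hpi : Integrable p) (hp1 : ∫ x, p x = 1)
    (hp2 : Integrable (fun x => p x ^ 2))
    (hsupp : ∀ x, ¬((x - μv) ⬝ᵥ (S⁻¹ *ᵥ (x - μv)) ≤ 4 + (d : ℝ)) → p x = 0)
    (hmean : ∀ i, Integrable (fun x => p x * x i) ∧ (∫ x, p x * x i) = μv i)
    (hcov : ∀ i j, Integrable (fun x => p x * (x i - μv i) * (x j - μv j)) ∧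
      (∫ x, p x * (x i - μv i) * (x j - μv j)) = S i j) :
    -Real.log (∫ x, p x ^ 2) ≤ -Real.log (∫ x, pstar x ^ 2) ∧
    (-Real.log (∫ x, p x ^ 2) = -Real.log (∫ x, pstar x ^ 2) ↔ p =ᵐ[volume] pstar) := by
  have hR0 : (0:ℝ) < 4 + (d:ℝ) := by positivity
  have hβ0 : 0 < β := by rw [hβ]; positivity
  have hβR : β * (4 + (d:ℝ)) = 1 := by rw [hβ]; field_simp
  have hA0 : 0 < A := by
    rw [hA]
    have h1 : 0 < Real.Gamma (2 + (d:ℝ)/2) := Real.Gamma_pos_of_pos (by positivity)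
    have h2 : 0 < β ^ ((d:ℝ)/2) := Real.rpow_pos_of_pos hβ0 _
    have h3 : 0 < π ^ ((d:ℝ)/2) := Real.rpow_pos_of_pos pi_pos _
    have h4 : 0 < Real.sqrt S.det := Real.sqrt_pos.2 hS.det_pos
    positivity
  set Q : (Fin d → ℝ) → ℝ := fun x => (x - μv) ⬝ᵥ (S⁻¹ *ᵥ (x - μv)) with hQdef
  have hQm : Measurable Q := ((cont_quad S⁻¹).comp (continuous_id.sub continuous_const)).measurable
  have hQ0 : ∀ x, 0 ≤ Q x := fun x => by
    have h := hS.inv.posSemidef.dotProduct_mulVec_nonneg (x - μv)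
    simp only [star_trivial] at h
    exact h
  -- moments of pstar
  obtain ⟨M1, M2⟩ := pstar_moments hd μv hS β A hβ hA
  have hM1 : ∫ x, pstar x = 1 := by rw [hpstar]; exact M1
  have hM2 : ∫ x, pstar x * Q x = (d:ℝ) := by
    have he : (fun x => pstar x * Q x) = fun x =>
        (if Q x ≤ 4 + (d:ℝ) then A * (1 - β * Q x) * Q x else 0) := by
      funext x
      rw [hpstar]
      show (if Q x ≤ 4 + (d:ℝ) then A * (1 - β * Q x) else 0) * Q x
        = (if Q x ≤ 4 + (d:ℝ) then A * (1 - β * Q x) * Q x else 0)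
      by_cases h : Q x ≤ 4 + (d:ℝ) <;> simp [h]
    rw [he]; exact M2
  -- integrability of pstar and friends
  have hbound0 : ∀ t ∈ Icc (0:ℝ) (4 + (d:ℝ)),
      |if t ≤ 4 + (d:ℝ) then A * (1 - β*t) else 0| ≤ A := by
    intro t ht
    rw [if_pos ht.2, abs_mul, abs_of_pos hA0]
    have h1 : β * t ≤ 1 := by
      calc β * t ≤ β * (4 + (d:ℝ)) := by nlinarith [ht.2, hβ0]
        _ = 1 := hβR
    have h2 : 0 ≤ β * t := mul_nonneg hβ0.le ht.1
    nlinarith [abs_of_nonneg (by linarith : (0:ℝ) ≤ 1 - β*t)]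
  have hintP : Integrable pstar := by
    rw [hpstar]
    exact integrable_Q μv hS (fun t : ℝ => if t ≤ 4 + (d:ℝ) then A * (1 - β*t) else 0)
      (Measurable.ite measurableSet_Iic (by fun_prop) measurable_const)
      hbound0 (fun t ht => if_neg (not_le.2 ht))
  have hintPQ : Integrable (fun x => pstar x * Q x) := by
    have he : (fun x => pstar x * Q x) = fun x =>
        (fun t : ℝ => if t ≤ 4 + (d:ℝ) then A * (1 - β*t) * t else 0) (Q x) := by
      funext x
      rw [hpstar]
      show (if Q x ≤ 4 + (d:ℝ) then A * (1 - β * Q x) else 0) * Q x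
        = (if Q x ≤ 4 + (d:ℝ) then A * (1 - β * Q x) * Q x else 0)
      by_cases h : Q x ≤ 4 + (d:ℝ) <;> simp [h]
    rw [he]
    refine integrable_Q μv hS (fun t : ℝ => if t ≤ 4 + (d:ℝ) then A * (1 - β*t) * t else 0)
      (Measurable.ite measurableSet_Iic
        ((by fun_prop : Measurable fun t : ℝ => A * (1 - β*t) * t)) measurable_const)
      (C := A * (4 + (d:ℝ))) ?_ (fun t ht => if_neg (not_le.2 ht))
    intro t ht
    show |if t ≤ 4 + (d:ℝ) then A * (1 - β*t) * t else 0| ≤ A * (4 + (d:ℝ))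
    rw [if_pos ht.2, abs_mul]
    have hb := hbound0 t ht
    rw [if_pos ht.2] at hb
    have : |t| ≤ 4 + (d:ℝ) := by rw [abs_of_nonneg ht.1]; exact ht.2
    nlinarith [abs_nonneg (A * (1 - β*t)), abs_nonneg t]
  have hintP2 : Integrable (fun x => pstar x ^ 2) := by
    have he : (fun x => pstar x ^ 2) = fun x =>
        (fun t : ℝ => (if t ≤ 4 + (d:ℝ) then A * (1 - β*t) else 0) ^ 2) (Q x) := by
      funext x; rw [hpstar]
    rw [he]
    refine integrable_Q μv hS (fun t : ℝ => (if t ≤ 4 + (d:ℝ) then A * (1 - β*t) else 0) ^ 2)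
      ((Measurable.ite measurableSet_Iic
        ((by fun_prop : Measurable fun t : ℝ => A * (1 - β*t))) measurable_const).pow_const 2)
      (C := A ^ 2) (R := 4 + (d:ℝ)) ?_ ?_
    · intro t ht
      have hb := hbound0 t ht
      show |(if t ≤ 4 + (d:ℝ) then A * (1 - β*t) else 0) ^ 2| ≤ A ^ 2
      rw [abs_pow]
      nlinarith [abs_nonneg (if t ≤ 4 + (d:ℝ) then A * (1 - β*t) else 0)]
    · intro t ht
      show (if t ≤ 4 + (d:ℝ) then A * (1 - β*t) else 0) ^ 2 = 0
      rw [if_neg (not_le.2 ht)]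
      norm_num
  -- ∫ pstar^2 = A * (1 - β * d)
  have hsq_id : (fun x => pstar x ^ 2)
      = fun x => A * pstar x - (A * β) * (pstar x * Q x) := by
    funext x
    rw [hpstar]
    show (if Q x ≤ 4 + (d:ℝ) then A * (1 - β * Q x) else 0) ^ 2
      = A * (if Q x ≤ 4 + (d:ℝ) then A * (1 - β * Q x) else 0)
        - (A * β) * ((if Q x ≤ 4 + (d:ℝ) then A * (1 - β * Q x) else 0) * Q x)
    by_cases h : Q x ≤ 4 + (d:ℝ) <;> simp [h] <;> ring
  have hE2 : ∫ x, pstar x ^ 2 = A * (1 - β * (d:ℝ)) := by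
    rw [hsq_id, integral_sub (hintP.const_mul A) (hintPQ.const_mul (A * β)),
      integral_const_mul, integral_const_mul, hM1, hM2]
    ring
  -- ∫ p * Q = d
  have hsymmS : ∀ i j, S i j = S j i := by
    intro i j
    have h := hS.isHermitian
    have := congrFun (congrFun h j) i
    simpa [Matrix.conjTranspose_apply] using this
  have hintpQ : Integrable (fun x => p x * Q x) ∧ ∫ x, p x * Q x = (d:ℝ) := by
    have hrep : (fun x => p x * Q x)
        = fun x => ∑ i, ∑ j, S⁻¹ i j * (p x * (x i - μv i) * (x j - μv j)) := by
      funext x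
      show p x * ((x - μv) ⬝ᵥ (S⁻¹ *ᵥ (x - μv))) = _
      rw [dotProduct, Finset.mul_sum]
      refine Finset.sum_congr rfl fun i _ => ?_
      rw [Matrix.mulVec, dotProduct, Finset.mul_sum, Finset.mul_sum]
      refine Finset.sum_congr rfl fun j _ => ?_
      show p x * ((x i - μv i) * (S⁻¹ i j * (x j - μv j)))
        = S⁻¹ i j * (p x * (x i - μv i) * (x j - μv j))
      ring
    constructor
    · rw [hrep]
      refine integrable_finset_sum _ fun i _ => integrable_finset_sum _ fun j _ => ?_
      exact ((hcov i j).1.const_mul _)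
    · rw [hrep, integral_finset_sum _ fun i _ =>
        integrable_finset_sum _ fun j _ => ((hcov i j).1.const_mul (S⁻¹ i j))]
      have : ∀ i, (∫ x, ∑ j, S⁻¹ i j * (p x * (x i - μv i) * (x j - μv j)))
          = ∑ j, S⁻¹ i j * S i j := by
        intro i
        rw [integral_finset_sum _ fun j _ => ((hcov i j).1.const_mul (S⁻¹ i j))]
        refine Finset.sum_congr rfl fun j _ => ?_
        rw [integral_const_mul, (hcov i j).2]
      rw [Finset.sum_congr rfl fun i _ => this i]
      -- trace computation
      have htr : ∑ i, ∑ j, S⁻¹ i j * S i j = Matrix.trace (S⁻¹ * S) := by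
        rw [Matrix.trace]
        refine Finset.sum_congr rfl fun i _ => ?_
        rw [Matrix.diag, Matrix.mul_apply]
        exact Finset.sum_congr rfl fun j _ => by rw [hsymmS j i]
      rw [htr, Matrix.nonsing_inv_mul S hS.det_pos.ne'.isUnit, Matrix.trace_one]
      simp
  -- ∫ p * pstar = A * (1 - β * d)
  have hprod_id : (fun x => p x * pstar x)
      = fun x => A * p x - (A * β) * (p x * Q x) := by
    funext x
    rw [hpstar]
    show p x * (if Q x ≤ 4 + (d:ℝ) then A * (1 - β * Q x) else 0)
      = A * p x - (A * β) * (p x * Q x)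
    by_cases h : Q x ≤ 4 + (d:ℝ)
    · rw [if_pos h]; ring
    · rw [if_neg h, hsupp x h]; ring
  have hintPp : Integrable (fun x => p x * pstar x) := by
    rw [hprod_id]
    exact (hpi.const_mul A).sub (hintpQ.1.const_mul (A * β))
  have hEpP : ∫ x, p x * pstar x = A * (1 - β * (d:ℝ)) := by
    rw [hprod_id, integral_sub (hpi.const_mul A) (hintpQ.1.const_mul (A * β)),
      integral_const_mul, integral_const_mul, hp1, hintpQ.2]
    ring
  -- key decomposition
  have hsqint : Integrable (fun x => (p x - pstar x) ^ 2) := by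
    have he : (fun x => (p x - pstar x) ^ 2)
        = fun x => p x ^ 2 - 2 * (p x * pstar x) + pstar x ^ 2 := by
      funext x; ring
    rw [he]
    have i1 : Integrable (fun x => p x ^ 2 - 2 * (p x * pstar x)) :=
      hp2.sub (hintPp.const_mul 2)
    exact i1.add hintP2
  have hdiff : ∫ x, (p x - pstar x) ^ 2 = (∫ x, p x ^ 2) - ∫ x, pstar x ^ 2 := by
    have he : (fun x => (p x - pstar x) ^ 2)
        = fun x => p x ^ 2 - 2 * (p x * pstar x) + pstar x ^ 2 := by
      funext x; ring
    have i1 : Integrable (fun x => p x ^ 2 - 2 * (p x * pstar x)) :=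
      hp2.sub (hintPp.const_mul 2)
    have i2 : Integrable (fun x => 2 * (p x * pstar x)) := hintPp.const_mul 2
    rw [he, integral_add i1 hintP2, integral_sub hp2 i2, integral_const_mul, hEpP, hE2]
    ring
  have hstarpos : 0 < ∫ x, pstar x ^ 2 := by
    rw [hE2]
    have h1 : β * (d:ℝ) < 1 := by
      calc β * (d:ℝ) < β * (4 + (d:ℝ)) := by
            have : (d:ℝ) < 4 + (d:ℝ) := by linarith
            exact (mul_lt_mul_iff_right₀ hβ0).2 this
        _ = 1 := hβR
    have : 0 < 1 - β * (d:ℝ) := by linarith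
    positivity
  have hge : (∫ x, pstar x ^ 2) ≤ ∫ x, p x ^ 2 := by
    have h0 : 0 ≤ ∫ x, (p x - pstar x) ^ 2 := integral_nonneg fun x => sq_nonneg _
    linarith [hdiff]
  have hppos : 0 < ∫ x, p x ^ 2 := lt_of_lt_of_le hstarpos hge
  constructor
  · exact neg_le_neg (Real.log_le_log hstarpos hge)
  constructor
  · intro heq
    have hlog : Real.log (∫ x, p x ^ 2) = Real.log (∫ x, pstar x ^ 2) := by linarith
    have heqI : (∫ x, p x ^ 2) = ∫ x, pstar x ^ 2 := by
      rw [← Real.exp_log hppos, ← Real.exp_log hstarpos, hlog]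
    have hzero : ∫ x, (p x - pstar x) ^ 2 = 0 := by rw [hdiff, heqI]; ring
    have hae : (fun x => (p x - pstar x) ^ 2) =ᵐ[volume] 0 :=
      (integral_eq_zero_iff_of_nonneg (fun x => sq_nonneg _) hsqint).mp hzero
    filter_upwards [hae] with x hx
    have : (p x - pstar x) ^ 2 = 0 := hx
    have := pow_eq_zero_iff (n := 2) (by norm_num) |>.mp this
    linarith [sub_eq_zero.mp this]
  · intro hae
    have : (∫ x, p x ^ 2) = ∫ x, pstar x ^ 2 := by
      refine integral_congr_ae ?_
      filter_upwards [hae] with x hx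
      rw [hx]
    rw [this]
end
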